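/- arXiv:1110.6530 — 3 statements merged into one kernel-verified Lean document; each statement's English description precedes it below -/
import Mathlib

section
/- Let P be a continuous probability kernel on the finite alphabet A with inf_{a∈A, x∈A^{-ℕ}} P(a|x) = δ > 0, and let X and Y be stationary chains compatible with P, with laws μ and ν respectively. Then the relative entropy rate lim_{n→∞} (1/(n+1)) Σ_{a ∈ A^{n+1}} μ[a] log( μ[a] / ν[a] ) exists and equals 0. -/
open MeasureTheory ProbabilityTheory Filter ENNReal

namespace GT

/-- The set of pasts: `x i` represents the symbol `x_{-(i+1)}`. -/
abbrev Past (A : Type*) := ℕ → A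

variable {A : Type*} [Fintype A] [MeasurableSpace A]

/-- The past of a bi-infinite trajectory: `past ω i = ω (-(i+1))`. -/
def past (ω : ℤ → A) : Past A := fun i => ω (-((i : ℤ) + 1))

/-- The left shift on bi-infinite sequences. -/
def shift (ω : ℤ → A) : ℤ → A := fun n => ω (n + 1)

/-- Shift invariance (stationarity) of a measure on `A^ℤ`. -/
def ShiftInvariant (μ : Measure (ℤ → A)) : Prop := μ.map shift = μ

/-- `P` is a (measurable) probability kernel on the alphabet `A`. -/
def IsProbKernel (P : A → Past A → ℝ) : Prop :=
  (∀ a, Measurable (P a)) ∧ (∀ a x, 0 ≤ P a x) ∧ ∀ x, ∑ a, P a x = 1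

/-- `μ` is compatible with the kernel `P`: `P` is a regular version of the
conditional probabilities of `μ` given the past. -/
def Compatible (P : A → Past A → ℝ) (μ : Measure (ℤ → A)) : Prop :=
  ∀ (a : A) (B : Set (Past A)), MeasurableSet B →
    (μ {ω | ω 0 = a ∧ past ω ∈ B}).toReal = ∫ ω in past ⁻¹' B, P a (past ω) ∂μ

/-- A stationary chain compatible with `P`. -/
def StatChain (P : A → Past A → ℝ) (μ : Measure (ℤ → A)) : Prop :=
  IsProbabilityMeasure μ ∧ ShiftInvariant μ ∧ Compatible P μ

/-- The continuity rate (variation) of order `k` of the kernel `P`. -/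
noncomputable def varRate (P : A → Past A → ℝ) (k : ℕ) : ℝ :=
  sSup {d | ∃ (b : A) (x y : Past A), (∀ i < k, x i = y i) ∧ d = |P b x - P b y|}

/-- A kernel is continuous if its continuity rate tends to `0`. -/
def ContinuousKernel (P : A → Past A → ℝ) : Prop :=
  Tendsto (varRate P) atTop (nhds 0)

/-- Strong non-nullness of a kernel. -/
def StronglyNonNull (P : A → Past A → ℝ) : Prop := ∃ δ > 0, ∀ a x, δ ≤ P a x

/-- A regular kernel: continuous and strongly non-null. -/
def RegularKernel (P : A → Past A → ℝ) : Prop := ContinuousKernel P ∧ StronglyNonNull P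

/-- Attractiveness: for every `a`, `x ↦ ∑_{b ≥ a} P(b|x)` is nondecreasing for the
coordinatewise partial order on pasts. -/
def Attractive [LinearOrder A] (P : A → Past A → ℝ) : Prop :=
  ∀ a : A, Monotone fun x : Past A => ∑ b ∈ Finset.univ.filter (fun b => a ≤ b), P b x

/-- The word `(X_1, …, X_n)` read off from a trajectory `ω`. -/
def word (n : ℕ) (ω : ℤ → A) : Fin n → A := fun j => ω (((j : ℕ) : ℤ) + 1)

/-- `δ_j f`: the oscillation of `f` along the `j`-th coordinate. -/
noncomputable def deltaj {n : ℕ} (f : (Fin n → A) → ℝ) (j : Fin n) : ℝ :=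
  sSup {d | ∃ a b : Fin n → A, (∀ i, i ≠ j → a i = b i) ∧ d = |f a - f b|}

/-- `‖δf‖_{ℓ1}`. -/
noncomputable def delta1 {n : ℕ} (f : (Fin n → A) → ℝ) : ℝ := ∑ j, deltaj f j

/-- `‖δf‖_{ℓ2}²`. -/
noncomputable def delta2sq {n : ℕ} (f : (Fin n → A) → ℝ) : ℝ := ∑ j, (deltaj f j) ^ 2

/-- Concentration of measure at exponential rate for the stationary law `μ`. -/
def ConcExpRate (μ : Measure (ℤ → A)) : Prop :=
  ∃ (C : ℝ) (g : ℝ → ℝ → ℝ), (∀ ε t, 0 < ε → 0 < t → 0 < g ε t) ∧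
    ∀ (n : ℕ), 1 ≤ n → ∀ (f : (Fin n → A) → ℝ) (ε : ℝ), 0 < ε →
      (μ {ω | ε < |f (word n ω) - ∫ ω', f (word n ω') ∂μ|}).toReal ≤
        C * Real.exp (-(g ε (delta1 f)) / delta2sq f)

/-- `ℙ` is the law of an i.i.d. process indexed by `ℤ`. -/
def IsIID {U : Type*} [MeasurableSpace U] (P : Measure (ℤ → U)) : Prop :=
  IsProbabilityMeasure P ∧
  iIndepFun (fun i (u : ℤ → U) => u i) P ∧
  ∀ i : ℤ, P.map (fun u => u i) = P.map (fun u => u 0)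

/-- A finitary coding of the process with law `ℙ` onto the process with law `μ`:
a shift-equivariant measurable factor map together with a.s. finite stopping
times `θ₁` (into the past) and `θ₂` (into the future) such that the zeroth output
symbol only depends on the coordinates in the window `[-θ₁, θ₂]`. -/
structure FinitaryCoding {U : Type*} [MeasurableSpace U]
    (μ : Measure (ℤ → A)) (P : Measure (ℤ → U)) where
  Φ : (ℤ → U) → ℤ → A
  meas : Measurable Φ
  equivariant : ∀ (u : ℤ → U) (n : ℤ), Φ (fun m => u (m + 1)) n = Φ u (n + 1)
  map_eq : P.map Φ = μ
  θ₁ : (ℤ → U) → ℕ∞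
  θ₂ : (ℤ → U) → ℕ∞
  meas_theta : ∀ k l : ℕ∞, MeasurableSet {u | θ₁ u = k ∧ θ₂ u = l}
  finite_ae : P {u | θ₁ u = ⊤ ∨ θ₂ u = ⊤} = 0
  window : ∀ (k l : ℕ) (u v : ℤ → U),
      (∀ j : ℤ, -(k : ℤ) ≤ j → j ≤ (l : ℤ) → u j = v j) →
      θ₁ u = (k : ℕ∞) → θ₂ u = (l : ℕ∞) → θ₁ v = (k : ℕ∞) ∧ θ₂ v = (l : ℕ∞)
  localize : ∀ u v : ℤ → U,
      (∀ j : ℤ, ((j.natAbs : ℕ∞) ≤ if j < 0 then θ₁ u else θ₂ u) → u j = v j) →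
      Φ u 0 = Φ v 0

/-- The new past obtained by appending the freshly generated symbol `a`. -/
def consPast (a : A) (x : Past A) : Past A := fun i =>
  match i with
  | 0 => a
  | j + 1 => x j

/-- The probability that the fixed-past chain with past `x` produces the word `w`
(first element of `w` generated first). -/
noncomputable def wordProb (P : A → Past A → ℝ) : Past A → List A → ℝ
  | _, [] => 1
  | x, a :: w => P a x * wordProb P (consPast a x) w

/-- `ℙ(X_{j+1}^x … X_{j+|w|}^x = w)`: the law of the fixed-past chain shifted by `j`. -/
noncomputable def shiftedCylProb (P : A → Past A → ℝ) (x : Past A) (j : ℕ) (w : List A) : ℝ :=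
  ∑ u : Fin j → A, wordProb P x (List.ofFn u ++ w)

/-- The cylinder set `{ω : ω_1 … ω_n = w}` (coordinates `1, …, |w|`). -/
def cylFrom1 (w : List A) : Set (ℤ → A) :=
  {ω | ∀ i : Fin w.length, ω (((i : ℕ) : ℤ) + 1) = w.get i}


variable {A : Type*} [Fintype A] [MeasurableSpace A]

/-- The cylinder set `{ω : ω_0 … ω_{n-1} = w}`. -/
def cyl (n : ℕ) (w : Fin n → A) : Set (ℤ → A) := {ω | ∀ i : Fin n, ω ((i : ℕ) : ℤ) = w i}

/-! ### Auxiliary lemmas -/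

section Aux

variable {P : A → Past A → ℝ}

lemma meas_shift : Measurable (shift : (ℤ → A) → ℤ → A) :=
  measurable_pi_lambda _ fun _ => measurable_pi_apply _

lemma meas_past : Measurable (past : (ℤ → A) → Past A) :=
  measurable_pi_lambda _ fun _ => measurable_pi_apply _

lemma P_le_one (hker : IsProbKernel P) (a : A) (x : Past A) : P a x ≤ 1 := by
  have h := hker.2.2 x
  calc P a x ≤ ∑ b, P b x :=
        Finset.single_le_sum (fun b _ => hker.2.1 b x) (Finset.mem_univ a)
    _ = 1 := h

lemma varRate_bddAbove (hker : IsProbKernel P) (k : ℕ) :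
    BddAbove {d | ∃ (b : A) (x y : Past A), (∀ i < k, x i = y i) ∧ d = |P b x - P b y|} := by
  refine ⟨1, ?_⟩
  rintro d ⟨b, x, y, -, rfl⟩
  have h1 := hker.2.1 b x
  have h2 := hker.2.1 b y
  have h3 := P_le_one hker b x
  have h4 := P_le_one hker b y
  rw [abs_sub_le_iff]
  constructor <;> linarith

lemma abs_sub_le_varRate (hker : IsProbKernel P) {k : ℕ} (b : A) {x y : Past A}
    (h : ∀ i < k, x i = y i) : |P b x - P b y| ≤ varRate P k :=
  le_csSup (varRate_bddAbove hker k) ⟨b, x, y, h, rfl⟩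

lemma varRate_nonneg (hker : IsProbKernel P) [Nonempty A] (k : ℕ) : 0 ≤ varRate P k := by
  have := abs_sub_le_varRate hker (k := k) (Classical.arbitrary A)
    (x := fun _ => Classical.arbitrary A) (y := fun _ => Classical.arbitrary A)
    (fun _ _ => rfl)
  simpa using this

lemma integrable_P (hker : IsProbKernel P) (μ : Measure (ℤ → A)) [IsProbabilityMeasure μ]
    (a : A) : Integrable (fun ω => P a (past ω)) μ := by
  refine Integrable.mono' (integrable_const 1) (((hker.1 a).comp meas_past).aestronglyMeasurable)
    (ae_of_all _ fun ω => ?_)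
  rw [Real.norm_eq_abs, abs_of_nonneg (hker.2.1 _ _)]
  exact P_le_one hker _ _

/-- The set `{ω : ω_0 = a}`. -/
def S0 (a : A) : Set (ℤ → A) := {ω : ℤ → A | ω 0 = a}

lemma S0_toReal (hker : IsProbKernel P) {μ : Measure (ℤ → A)} [IsProbabilityMeasure μ]
    (hcomp : Compatible P μ) (a : A) :
    (μ (S0 a)).toReal = ∫ ω, P a (past ω) ∂μ := by
  have h := hcomp a Set.univ MeasurableSet.univ
  have h1 : {ω : ℤ → A | ω 0 = a ∧ past ω ∈ Set.univ} = S0 a := by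
    ext ω; simp [S0]
  have h2 : (past : (ℤ → A) → Past A) ⁻¹' Set.univ = Set.univ := by simp
  rw [h1, h2, setIntegral_univ] at h
  exact h

lemma sum_S0_toReal (hker : IsProbKernel P) {μ : Measure (ℤ → A)} [IsProbabilityMeasure μ]
    (hcomp : Compatible P μ) : ∑ a, (μ (S0 a)).toReal = 1 := by
  have : ∑ a, (μ (S0 a)).toReal = ∑ a, ∫ ω, P a (past ω) ∂μ := by
    exact Finset.sum_congr rfl fun a _ => S0_toReal hker hcomp a
  rw [this, ← integral_finset_sum _ (fun a _ => integrable_P hker μ a)]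
  simp [hker.2.2]

lemma delta_le_S0 (hker : IsProbKernel P) {δ : ℝ} (hbound : ∀ a x, δ ≤ P a x)
    {μ : Measure (ℤ → A)} [IsProbabilityMeasure μ] (hcomp : Compatible P μ) (a : A) :
    δ ≤ (μ (S0 a)).toReal := by
  rw [S0_toReal hker hcomp a]
  have : ∫ (_ : ℤ → A), δ ∂μ ≤ ∫ ω, P a (past ω) ∂μ :=
    integral_mono (integrable_const δ) (integrable_P hker μ a) (fun ω => hbound a (past ω))
  simpa using this

/-- Under the hypotheses of the theorem, singletons of `A` are measurable. -/
lemma singletons_meas (hker : IsProbKernel P) {δ : ℝ} (hδ : 0 < δ)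
    (hbound : ∀ a x, δ ≤ P a x) {μ : Measure (ℤ → A)} (hμ : StatChain P μ) (a : A) :
    MeasurableSet ({a} : Set A) := by
  classical
  obtain ⟨hprob, hinv, hcomp⟩ := hμ
  haveI := hprob
  -- separation of `a` from every other point
  have sep : ∀ b : A, b ≠ a → ∃ M : Set A, MeasurableSet M ∧ a ∈ M ∧ b ∉ M := by
    intro b hb
    by_contra hno
    push_neg at hno
    have hiff : ∀ M : Set A, MeasurableSet M → (a ∈ M ↔ b ∈ M) := by
      intro M hM
      constructor
      · intro haM
        by_contra hbM
        exact hbM (hno M hM haM)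
      · intro hbM
        by_contra haM
        exact (hno Mᶜ hM.compl haM) hbM
    set τ : A ≃ A := Equiv.swap a b with hτ
    have hτM : ∀ M : Set A, MeasurableSet M → τ ⁻¹' M = M := by
      intro M hM
      ext c
      rcases eq_or_ne c a with rfl | hca
      · simp only [Set.mem_preimage, hτ, Equiv.swap_apply_left]
        exact (hiff M hM).symm
      rcases eq_or_ne c b with rfl | hcb
      · simp only [Set.mem_preimage, hτ, Equiv.swap_apply_right]
        exact hiff M hM
      · simp [hτ, Equiv.swap_apply_of_ne_of_ne hca hcb]
    set σ : (ℤ → A) → ℤ → A := fun ω n => τ (ω n) with hσ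
    -- every measurable set of trajectories is `σ`-invariant
    have hσU : ∀ U : Set (ℤ → A), MeasurableSet U → σ ⁻¹' U = U := by
      intro U hU
      let m2 : MeasurableSpace (ℤ → A) :=
        { MeasurableSet' := fun V => σ ⁻¹' V = V
          measurableSet_empty := by simp
          measurableSet_compl := fun s hs => by
            show σ ⁻¹' sᶜ = sᶜ
            rw [Set.preimage_compl]; exact congrArg compl hs
          measurableSet_iUnion := fun f hf => by
            show σ ⁻¹' (⋃ i, f i) = ⋃ i, f i
            rw [Set.preimage_iUnion]; exact Set.iUnion_congr hf }
      have hle : (MeasurableSpace.pi : MeasurableSpace (ℤ → A)) ≤ m2 := by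
        refine iSup_le fun i => ?_
        rintro s ⟨M, hM, rfl⟩
        show σ ⁻¹' ((fun ω : ℤ → A => ω i) ⁻¹' M) = _
        have : σ ⁻¹' ((fun ω : ℤ → A => ω i) ⁻¹' M) = (fun ω : ℤ → A => ω i) ⁻¹' (τ ⁻¹' M) :=
          rfl
        rw [this, hτM M hM]
      exact hle U hU
    have hσS0 : σ ⁻¹' S0 a = S0 b := by
      ext ω
      simp only [Set.mem_preimage, S0, Set.mem_setOf_eq, hσ]
      constructor
      · intro h
        have : ω 0 = τ.symm a := by rw [← h]; simp
        rwa [hτ, Equiv.symm_swap, Equiv.swap_apply_left] at this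
      · intro h; rw [h, hτ, Equiv.swap_apply_right]
    -- the measurable hulls
    set H : Set (ℤ → A) := toMeasurable μ (S0 a) with hH
    set K : Set (ℤ → A) := toMeasurable μ (S0 a)ᶜ with hK
    have hHm : MeasurableSet H := measurableSet_toMeasurable _ _
    have hKm : MeasurableSet K := measurableSet_toMeasurable _ _
    have hμH : μ H = μ (S0 a) := measure_toMeasurable _
    have hμK : μ K = μ (S0 a)ᶜ := measure_toMeasurable _
    have hcompl : (S0 a)ᶜ = ⋃ c ∈ Finset.univ.erase a, S0 c := by
      ext ω
      simp only [Set.mem_compl_iff, S0, Set.mem_setOf_eq, Set.mem_iUnion,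
        Finset.mem_erase, Finset.mem_univ, and_true, exists_prop]
      constructor
      · intro h; exact ⟨ω 0, h, rfl⟩
      · rintro ⟨c, hc, rfl⟩; exact hc
    have hsum : ∑ c, μ (S0 c) = 1 := by
      have hne : ∀ c ∈ Finset.univ, μ (S0 c) ≠ ⊤ := fun c _ => measure_ne_top μ _
      have := ENNReal.toReal_sum hne
      rw [sum_S0_toReal hker hcomp] at this
      have hfin : ∑ c, μ (S0 c) ≠ ⊤ := by
        rw [← lt_top_iff_ne_top]
        exact ENNReal.sum_lt_top.2 fun c _ => lt_top_iff_ne_top.2 (measure_ne_top μ _)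
      rw [← ENNReal.ofReal_toReal hfin, this]
      simp
    have hle1 : μ H + μ K ≤ 1 := by
      rw [hμH, hμK, hcompl]
      calc μ (S0 a) + μ (⋃ c ∈ Finset.univ.erase a, S0 c)
          ≤ μ (S0 a) + ∑ c ∈ Finset.univ.erase a, μ (S0 c) := by
            exact add_le_add le_rfl (measure_biUnion_finset_le _ _)
        _ = ∑ c, μ (S0 c) := Finset.add_sum_erase _ (fun c => μ (S0 c)) (Finset.mem_univ a)
        _ = 1 := hsum
    have hunion : H ∪ K = Set.univ := by
      apply Set.eq_univ_of_univ_subset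
      intro ω _
      by_cases h : ω ∈ S0 a
      · exact Or.inl (subset_toMeasurable μ _ h)
      · exact Or.inr (subset_toMeasurable μ _ h)
    have hHK0 : μ (H ∩ K) = 0 := by
      have h1 := measure_union_add_inter (μ := μ) H hKm
      rw [hunion, measure_univ] at h1
      have : (1 : ℝ≥0∞) + μ (H ∩ K) ≤ 1 + 0 := by
        rw [add_zero, h1]; exact hle1
      exact le_antisymm ((ENNReal.add_le_add_iff_left one_ne_top).1 this) (zero_le)
    -- `Kᶜ ⊆ S0 a ∩ S0 b = ∅`, so `K = univ` and `S0 a ⊆ H ∩ K`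
    have hKc : Kᶜ ⊆ S0 a := by
      rw [hK, ← Set.compl_subset_compl]
      simpa using subset_toMeasurable μ (S0 a)ᶜ
    have hKinv : σ ⁻¹' K = K := hσU K hKm
    have hKcb : Kᶜ ⊆ S0 b := by
      have : σ ⁻¹' Kᶜ ⊆ σ ⁻¹' (S0 a) := Set.preimage_mono hKc
      rw [hσS0] at this
      rwa [Set.preimage_compl, hKinv] at this
    have hKempty : Kᶜ = ∅ := by
      apply Set.eq_empty_of_forall_notMem
      intro ω hω
      have h1 : ω 0 = a := hKc hω
      have h2 : ω 0 = b := hKcb hω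
      exact hb (h2 ▸ h1)
    have hKuniv : K = Set.univ := by
      rwa [Set.compl_empty_iff] at hKempty
    have hsubset : S0 a ⊆ H ∩ K := by
      rw [hKuniv]
      exact Set.subset_inter (subset_toMeasurable μ _) (Set.subset_univ _)
    have : μ (S0 a) = 0 := le_antisymm (hHK0 ▸ measure_mono hsubset) (zero_le)
    have hδa := delta_le_S0 hker hbound hcomp a
    rw [this] at hδa
    simp only [ENNReal.toReal_zero] at hδa
    linarith
  -- build `{a}` as a finite intersection of separating sets
  choose M hMm haM hbM using sep
  have : ({a} : Set A) = ⋂ (b : A), ⋂ (h : b ≠ a), M b h := by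
    ext c
    simp only [Set.mem_singleton_iff, Set.mem_iInter]
    constructor
    · rintro rfl b h; exact haM b h
    · intro h
      by_contra hc
      exact hbM c hc (h c hc)
  rw [this]
  exact MeasurableSet.iInter fun b => MeasurableSet.iInter fun h => hMm b h

end Aux
section Aux2

variable {P : A → Past A → ℝ}

/-- Cylinder on coordinates `0, -1, …, -(n-1)`. -/
def D (n : ℕ) (w : Fin n → A) : Set (ℤ → A) :=
  {ω : ℤ → A | ∀ i : Fin n, ω (-((i : ℕ) : ℤ)) = w i}

/-- Cylinder on coordinates `-1, -2, …, -n`. -/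
def pD (n : ℕ) (w : Fin n → A) : Set (ℤ → A) :=
  {ω : ℤ → A | ∀ i : Fin n, ω (-((i : ℕ) : ℤ) - 1) = w i}

lemma meas_D (hsing : ∀ a : A, MeasurableSet ({a} : Set A)) (n : ℕ) (w : Fin n → A) :
    MeasurableSet (D n w) := by
  have : D n w = ⋂ i : Fin n, (fun ω : ℤ → A => ω (-((i : ℕ) : ℤ))) ⁻¹' {w i} := by
    ext ω; simp [D]
  rw [this]
  exact MeasurableSet.iInter fun i => (measurable_pi_apply _) (hsing _)

lemma meas_pD (hsing : ∀ a : A, MeasurableSet ({a} : Set A)) (n : ℕ) (w : Fin n → A) :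
    MeasurableSet (pD n w) := by
  have : pD n w = ⋂ i : Fin n, (fun ω : ℤ → A => ω (-((i : ℕ) : ℤ) - 1)) ⁻¹' {w i} := by
    ext ω; simp [pD]
  rw [this]
  exact MeasurableSet.iInter fun i => (measurable_pi_apply _) (hsing _)

lemma mu_pD (hsing : ∀ a : A, MeasurableSet ({a} : Set A)) {μ : Measure (ℤ → A)}
    (hinv : ShiftInvariant μ) (n : ℕ) (w : Fin n → A) : μ (pD n w) = μ (D n w) := by
  have hset : D n w = shift ⁻¹' (pD n w) := by
    ext ω
    simp only [D, pD, Set.mem_preimage, Set.mem_setOf_eq, shift]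
    refine forall_congr' fun i => ?_
    rw [show -((i : ℕ) : ℤ) - 1 + 1 = -((i : ℕ) : ℤ) by ring]
  rw [hset, ← Measure.map_apply meas_shift (meas_pD hsing n w), hinv]

lemma rec_formula (hsing : ∀ a : A, MeasurableSet ({a} : Set A)) {μ : Measure (ℤ → A)}
    (hcomp : Compatible P μ) (n : ℕ) (w : Fin n → A) (a : A) :
    (μ (D (n + 1) (Fin.cons a w))).toReal = ∫ ω in pD n w, P a (past ω) ∂μ := by
  have hB : MeasurableSet {x : Past A | ∀ i : Fin n, x (i : ℕ) = w i} := by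
    have : {x : Past A | ∀ i : Fin n, x (i : ℕ) = w i}
        = ⋂ i : Fin n, (fun x : Past A => x (i : ℕ)) ⁻¹' {w i} := by ext x; simp
    rw [this]
    exact MeasurableSet.iInter fun i => (measurable_pi_apply _) (hsing _)
  have h := hcomp a _ hB
  have h1 : {ω : ℤ → A | ω 0 = a ∧ past ω ∈ {x : Past A | ∀ i : Fin n, x (i : ℕ) = w i}}
      = D (n + 1) (Fin.cons a w) := by
    ext ω
    simp only [Set.mem_setOf_eq, D, past]
    constructor
    · rintro ⟨h0, hs⟩ i
      refine Fin.cases ?_ ?_ i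
      · simpa using h0
      · intro j
        have hj := hs j
        simp only [Fin.cons_succ]
        convert hj using 2 <;> (push_cast [Fin.val_succ]; try ring)
    · intro h
      constructor
      · simpa using h 0
      · intro j
        have hj := h j.succ
        simp only [Fin.cons_succ] at hj
        convert hj using 2 <;> (push_cast [Fin.val_succ]; try ring)
  have h2 : (past : (ℤ → A) → Past A) ⁻¹' {x : Past A | ∀ i : Fin n, x (i : ℕ) = w i}
      = pD n w := by
    ext ω
    simp only [Set.mem_preimage, Set.mem_setOf_eq, past, pD]
    refine forall_congr' fun i => ?_
    rw [show -(((i : ℕ) : ℤ) + 1) = -((i : ℕ) : ℤ) - 1 by ring]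
  rw [h1, h2] at h
  exact h

/-- A reference past extending the word `w`. -/
noncomputable def extPast [Nonempty A] (n : ℕ) (w : Fin n → A) : Past A :=
  fun i => if h : i < n then w ⟨i, h⟩ else Classical.arbitrary A

lemma pD_past_close [Nonempty A] {n : ℕ} {w : Fin n → A} {ω : ℤ → A} (hω : ω ∈ pD n w) :
    ∀ i < n, past ω i = extPast n w i := by
  intro i hi
  have hωi := hω ⟨i, hi⟩
  simp only [past, extPast, dif_pos hi]
  rw [show -((i : ℤ) + 1) = -((i : ℕ) : ℤ) - 1 by ring]
  exact hωi

lemma D_upper [Nonempty A] (hsing : ∀ a : A, MeasurableSet ({a} : Set A))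
    (hker : IsProbKernel P) {μ : Measure (ℤ → A)} [IsProbabilityMeasure μ]
    (hinv : ShiftInvariant μ) (hcomp : Compatible P μ) (n : ℕ) (w : Fin n → A) (a : A) :
    (μ (D (n + 1) (Fin.cons a w))).toReal
      ≤ (P a (extPast n w) + varRate P n) * (μ (D n w)).toReal := by
  rw [rec_formula hsing hcomp n w a]
  have hint : IntegrableOn (fun ω => P a (past ω)) (pD n w) μ := (integrable_P hker μ a).restrict
  have hmono : ∫ ω in pD n w, P a (past ω) ∂μ
      ≤ ∫ _ in pD n w, (P a (extPast n w) + varRate P n) ∂μ := by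
    refine setIntegral_mono_on hint
      (integrableOn_const (measure_ne_top μ _)) (meas_pD hsing n w) ?_
    intro ω hω
    have habs := abs_sub_le_varRate hker a (x := past ω) (y := extPast n w)
      (fun i hi => pD_past_close hω i hi)
    have := (abs_le.1 habs).2
    linarith
  calc ∫ ω in pD n w, P a (past ω) ∂μ
      ≤ ∫ _ in pD n w, (P a (extPast n w) + varRate P n) ∂μ := hmono
    _ = (μ (pD n w)).toReal * (P a (extPast n w) + varRate P n) := by
        rw [setIntegral_const, smul_eq_mul]; rfl
    _ = (P a (extPast n w) + varRate P n) * (μ (D n w)).toReal := by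
        rw [mu_pD hsing hinv, mul_comm]

lemma D_lower [Nonempty A] (hsing : ∀ a : A, MeasurableSet ({a} : Set A))
    (hker : IsProbKernel P) {δ : ℝ} (hbound : ∀ a x, δ ≤ P a x)
    {μ : Measure (ℤ → A)} [IsProbabilityMeasure μ]
    (hinv : ShiftInvariant μ) (hcomp : Compatible P μ) (n : ℕ) (w : Fin n → A) (a : A) :
    max δ (P a (extPast n w) - varRate P n) * (μ (D n w)).toReal
      ≤ (μ (D (n + 1) (Fin.cons a w))).toReal := by
  rw [rec_formula hsing hcomp n w a]
  have hint : IntegrableOn (fun ω => P a (past ω)) (pD n w) μ := (integrable_P hker μ a).restrict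
  have hmono : ∫ _ in pD n w, max δ (P a (extPast n w) - varRate P n) ∂μ
      ≤ ∫ ω in pD n w, P a (past ω) ∂μ := by
    refine setIntegral_mono_on
      (integrableOn_const (measure_ne_top μ _)) hint (meas_pD hsing n w) ?_
    intro ω hω
    have habs := abs_sub_le_varRate hker a (x := past ω) (y := extPast n w)
      (fun i hi => pD_past_close hω i hi)
    have h1 := (abs_le.1 habs).1
    exact max_le (hbound a _) (by linarith)
  calc max δ (P a (extPast n w) - varRate P n) * (μ (D n w)).toReal
      = (μ (pD n w)).toReal * max δ (P a (extPast n w) - varRate P n) := by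
        rw [mu_pD hsing hinv, mul_comm]
    _ = ∫ _ in pD n w, max δ (P a (extPast n w) - varRate P n) ∂μ := by
        rw [setIntegral_const, smul_eq_mul]; rfl
    _ ≤ ∫ ω in pD n w, P a (past ω) ∂μ := hmono

lemma sum_rec (hsing : ∀ a : A, MeasurableSet ({a} : Set A))
    (hker : IsProbKernel P) {μ : Measure (ℤ → A)} [IsProbabilityMeasure μ]
    (hinv : ShiftInvariant μ) (hcomp : Compatible P μ) (n : ℕ) (w : Fin n → A) :
    ∑ a, (μ (D (n + 1) (Fin.cons a w))).toReal = (μ (D n w)).toReal := by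
  have hrec : ∀ a : A, (μ (D (n + 1) (Fin.cons a w))).toReal
      = ∫ ω in pD n w, P a (past ω) ∂μ := fun a => rec_formula hsing hcomp n w a
  simp_rw [hrec]
  rw [← integral_finset_sum _ (fun a _ => (integrable_P hker μ a).restrict)]
  have hone : ∀ ω : ℤ → A, ∑ a, P a (past ω) = (1 : ℝ) := fun ω => hker.2.2 (past ω)
  simp_rw [hone]
  rw [setIntegral_const, smul_eq_mul, mul_one]
  exact congrArg ENNReal.toReal (mu_pD hsing hinv n w)

lemma D_zero (w : Fin 0 → A) : D 0 w = Set.univ :=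
  Set.eq_univ_of_forall fun ω => fun i => i.elim0

lemma sum_D (hsing : ∀ a : A, MeasurableSet ({a} : Set A))
    (hker : IsProbKernel P) {μ : Measure (ℤ → A)} [IsProbabilityMeasure μ]
    (hinv : ShiftInvariant μ) (hcomp : Compatible P μ) :
    ∀ n : ℕ, ∑ w : Fin n → A, (μ (D n w)).toReal = 1 := by
  intro n
  induction n with
  | zero =>
    rw [Fintype.sum_unique]
    rw [D_zero]
    simp
  | succ n ih =>
    rw [← Equiv.sum_comp (Fin.consEquiv fun _ : Fin (n + 1) => A)
      (fun w => (μ (D (n + 1) w)).toReal), Fintype.sum_prod_type, Finset.sum_comm]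
    have hstep : ∀ w : Fin n → A,
        ∑ a, (μ (D (n + 1) ((Fin.consEquiv fun _ : Fin (n + 1) => A) (a, w)))).toReal
          = (μ (D n w)).toReal := by
      intro w
      exact sum_rec hsing hker hinv hcomp n w
    rw [Finset.sum_congr rfl fun w _ => hstep w]
    exact ih

lemma D_pos [Nonempty A] (hsing : ∀ a : A, MeasurableSet ({a} : Set A))
    (hker : IsProbKernel P) {δ : ℝ} (hδ : 0 < δ) (hbound : ∀ a x, δ ≤ P a x)
    {μ : Measure (ℤ → A)} [IsProbabilityMeasure μ]
    (hinv : ShiftInvariant μ) (hcomp : Compatible P μ) :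
    ∀ (n : ℕ) (w : Fin n → A), δ ^ n ≤ (μ (D n w)).toReal := by
  intro n
  induction n with
  | zero => intro w; rw [D_zero]; simp
  | succ n ih =>
    intro w
    rw [← Fin.cons_self_tail w]
    have hl := D_lower hsing hker hbound hinv hcomp n (Fin.tail w) (w 0)
    have h1 : δ * δ ^ n
        ≤ max δ (P (w 0) (extPast n (Fin.tail w)) - varRate P n)
          * (μ (D n (Fin.tail w))).toReal :=
      mul_le_mul (le_max_left _ _) (ih (Fin.tail w)) (pow_nonneg hδ.le n)
        (le_trans hδ.le (le_max_left _ _))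
    calc δ ^ (n + 1) = δ * δ ^ n := by ring
      _ ≤ _ := le_trans h1 hl

lemma ratio_le [Nonempty A] (hsing : ∀ a : A, MeasurableSet ({a} : Set A))
    (hker : IsProbKernel P) {δ : ℝ} (hδ : 0 < δ) (hbound : ∀ a x, δ ≤ P a x)
    {μ ν : Measure (ℤ → A)} [IsProbabilityMeasure μ] [IsProbabilityMeasure ν]
    (hμi : ShiftInvariant μ) (hμc : Compatible P μ)
    (hνi : ShiftInvariant ν) (hνc : Compatible P ν) :
    ∀ (n : ℕ) (w : Fin n → A),
      (μ (D n w)).toReal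
        ≤ (∏ k ∈ Finset.range n, (1 + 4 * varRate P k / δ)) * (ν (D n w)).toReal := by
  intro n
  induction n with
  | zero => intro w; rw [D_zero]; simp
  | succ n ih =>
    intro w
    rw [← Fin.cons_self_tail w]
    set a := w 0 with ha
    set v := Fin.tail w with hv
    set q := P a (extPast n v) with hq
    set r := varRate P n with hr
    set Pn : ℝ := ∏ k ∈ Finset.range n, (1 + 4 * varRate P k / δ) with hPn
    have hr0 : 0 ≤ r := varRate_nonneg hker n
    have hqδ : δ ≤ q := hbound a _
    have hPn0 : 0 ≤ Pn := Finset.prod_nonneg fun k _ => by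
      have := varRate_nonneg hker (P := P) k
      positivity
    have h1 : (μ (D (n + 1) (Fin.cons a v))).toReal ≤ (q + r) * (μ (D n v)).toReal :=
      D_upper hsing hker hμi hμc n v a
    have h2 : (q + r) * (μ (D n v)).toReal ≤ (q + r) * (Pn * (ν (D n v)).toReal) :=
      mul_le_mul_of_nonneg_left (ih v) (by linarith)
    have hM : δ ≤ max δ (q - r) := le_max_left _ _
    have hMqr : q - r ≤ max δ (q - r) := le_max_right _ _
    have hKM : q + r ≤ (1 + 4 * r / δ) * max δ (q - r) := by
      have h4 : (4 * r / δ) * δ ≤ (4 * r / δ) * max δ (q - r) :=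
        mul_le_mul_of_nonneg_left hM (by positivity)
      have h5 : (4 * r / δ) * δ = 4 * r := by field_simp
      nlinarith
    have hν0 : 0 ≤ (ν (D n v)).toReal := ENNReal.toReal_nonneg
    have h3 : (q + r) * (Pn * (ν (D n v)).toReal)
        ≤ ((1 + 4 * r / δ) * max δ (q - r)) * (Pn * (ν (D n v)).toReal) :=
      mul_le_mul_of_nonneg_right hKM (by positivity)
    have h6 : max δ (q - r) * (ν (D n v)).toReal ≤ (ν (D (n + 1) (Fin.cons a v))).toReal :=
      D_lower hsing hker hbound hνi hνc n v a
    have h7 : ((1 + 4 * r / δ) * max δ (q - r)) * (Pn * (ν (D n v)).toReal)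
        = (Pn * (1 + 4 * r / δ)) * (max δ (q - r) * (ν (D n v)).toReal) := by ring
    have h8 : (Pn * (1 + 4 * r / δ)) * (max δ (q - r) * (ν (D n v)).toReal)
        ≤ (Pn * (1 + 4 * r / δ)) * (ν (D (n + 1) (Fin.cons a v))).toReal := by
      refine mul_le_mul_of_nonneg_left h6 ?_
      have : (0:ℝ) ≤ 1 + 4 * r / δ := by positivity
      positivity
    rw [Finset.prod_range_succ]
    calc (μ (D (n + 1) (Fin.cons a v))).toReal
        ≤ (q + r) * (μ (D n v)).toReal := h1
      _ ≤ (q + r) * (Pn * (ν (D n v)).toReal) := h2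
      _ ≤ ((1 + 4 * r / δ) * max δ (q - r)) * (Pn * (ν (D n v)).toReal) := h3
      _ = (Pn * (1 + 4 * r / δ)) * (max δ (q - r) * (ν (D n v)).toReal) := h7
      _ ≤ (Pn * (1 + 4 * r / δ)) * (ν (D (n + 1) (Fin.cons a v))).toReal := h8

lemma iterate_shift_apply : ∀ (m : ℕ) (ω : ℤ → A) (k : ℤ), (shift^[m]) ω k = ω (k + m)
  | 0, ω, k => by simp
  | m + 1, ω, k => by
    rw [Function.iterate_succ_apply]
    rw [iterate_shift_apply m (shift ω) k]
    show ω (k + (m : ℤ) + 1) = ω (k + ((m + 1 : ℕ) : ℤ))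
    congr 1
    push_cast
    ring

lemma map_iterate {μ : Measure (ℤ → A)} (hinv : ShiftInvariant μ) :
    ∀ m : ℕ, μ.map (shift^[m]) = μ
  | 0 => by simp [Measure.map_id]
  | m + 1 => by
    rw [Function.iterate_succ, ← Measure.map_map (meas_shift.iterate m) meas_shift, hinv,
      map_iterate hinv m]

lemma cyl_eq_D (hsing : ∀ a : A, MeasurableSet ({a} : Set A)) {μ : Measure (ℤ → A)}
    (hinv : ShiftInvariant μ) (n : ℕ) (w : Fin (n + 1) → A) :
    μ (cyl (n + 1) w) = μ (D (n + 1) (fun i => w (Fin.rev i))) := by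
  have hidx : ∀ i : Fin (n + 1), -(((i : ℕ)) : ℤ) + (n : ℤ) = ((Fin.rev i : ℕ) : ℤ) := by
    intro i
    have := i.isLt
    rw [Fin.val_rev]
    omega
  have hset : cyl (n + 1) w = (shift^[n]) ⁻¹' (D (n + 1) (fun i => w (Fin.rev i))) := by
    ext ω
    simp only [cyl, D, Set.mem_preimage, Set.mem_setOf_eq, iterate_shift_apply]
    constructor
    · intro h i
      rw [hidx i]
      exact h (Fin.rev i)
    · intro h j
      have hh := h (Fin.rev j)
      rw [hidx (Fin.rev j), Fin.rev_rev] at hh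
      exact hh
  rw [hset, ← Measure.map_apply (meas_shift.iterate n) (meas_D hsing _ _), map_iterate hinv n]

end Aux2
/-- **Lemma 4** (Gallo–Takahashi): two stationary chains compatible with the same
continuous, strongly non-null kernel have relative entropy rate zero. -/
theorem statement9 (P : A → Past A → ℝ) (hker : IsProbKernel P)
    (hcont : ContinuousKernel P) (δ : ℝ) (hδ : 0 < δ) (hbound : ∀ a x, δ ≤ P a x)
    (μ ν : Measure (ℤ → A)) (hμ : StatChain P μ) (hν : StatChain P ν) :
    Tendsto (fun n : ℕ =>
        (1 / ((n : ℝ) + 1)) * ∑ w : Fin (n + 1) → A,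
          (μ (cyl (n + 1) w)).toReal *
            Real.log ((μ (cyl (n + 1) w)).toReal / (ν (cyl (n + 1) w)).toReal))
      atTop (nhds 0) := by
  classical
  rcases isEmpty_or_nonempty A with hA | hA
  · exfalso
    haveI : IsEmpty (ℤ → A) := ⟨fun f => IsEmpty.false (f 0)⟩
    have h1 : μ Set.univ = 1 := hμ.1.measure_univ
    rw [Set.univ_eq_empty_iff.2 inferInstance, measure_empty] at h1
    exact zero_ne_one h1
  have hsing : ∀ a : A, MeasurableSet ({a} : Set A) := singletons_meas hker hδ hbound hμ
  obtain ⟨hμp, hμi, hμc⟩ := hμ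
  obtain ⟨hνp, hνi, hνc⟩ := hν
  haveI := hμp; haveI := hνp
  set K : ℕ → ℝ := fun k => 1 + 4 * varRate P k / δ with hK
  have hK1 : ∀ k, 1 ≤ K k := by
    intro k
    have hv := varRate_nonneg hker (P := P) k
    have : 0 ≤ 4 * varRate P k / δ := by positivity
    simp only [hK]; linarith
  set c : ℕ → ℝ := fun k => Real.log (K k) with hc
  have hc0 : ∀ k, 0 ≤ c k := fun k => Real.log_nonneg (hK1 k)
  have hprod1 : ∀ m : ℕ, 1 ≤ ∏ k ∈ Finset.range m, K k := by
    intro m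
    induction m with
    | zero => simp
    | succ m ih =>
      rw [Finset.prod_range_succ]
      nlinarith [hK1 m]
  -- the main quantitative bound
  have hbnd : ∀ n : ℕ, ‖(1 / ((n : ℝ) + 1)) * ∑ w : Fin (n + 1) → A,
      (μ (cyl (n + 1) w)).toReal *
        Real.log ((μ (cyl (n + 1) w)).toReal / (ν (cyl (n + 1) w)).toReal)‖
      ≤ (1 / ((n : ℝ) + 1)) * ∑ k ∈ Finset.range (n + 1), c k := by
    intro n
    have hre : (∑ w : Fin (n + 1) → A,
        (μ (cyl (n + 1) w)).toReal *
          Real.log ((μ (cyl (n + 1) w)).toReal / (ν (cyl (n + 1) w)).toReal))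
        = ∑ w : Fin (n + 1) → A,
        (μ (D (n + 1) w)).toReal *
          Real.log ((μ (D (n + 1) w)).toReal / (ν (D (n + 1) w)).toReal) := by
      rw [Finset.sum_congr rfl (fun w _ => by
        rw [cyl_eq_D hsing hμi n w, cyl_eq_D hsing hνi n w])]
      exact Fintype.sum_bijective (fun w : Fin (n + 1) → A => fun i => w (Fin.rev i))
        (Function.Involutive.bijective fun w => by funext i; simp [Fin.rev_rev])
        _ _ (fun w => rfl)
    rw [hre]
    set Pn : ℝ := ∏ k ∈ Finset.range (n + 1), K k with hPn
    have hPn1 : 1 ≤ Pn := hprod1 (n + 1)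
    have hPnpos : 0 < Pn := lt_of_lt_of_le one_pos hPn1
    have hlogPn : Real.log Pn = ∑ k ∈ Finset.range (n + 1), c k :=
      Real.log_prod (fun k _ => by have := hK1 k; positivity)
    have hterm : ∀ w : Fin (n + 1) → A,
        ‖(μ (D (n + 1) w)).toReal *
          Real.log ((μ (D (n + 1) w)).toReal / (ν (D (n + 1) w)).toReal)‖
        ≤ (μ (D (n + 1) w)).toReal * Real.log Pn := by
      intro w
      set x := (μ (D (n + 1) w)).toReal with hx'
      set y := (ν (D (n + 1) w)).toReal with hy'
      have hx : 0 < x :=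
        lt_of_lt_of_le (pow_pos hδ (n + 1)) (D_pos hsing hker hδ hbound hμi hμc (n + 1) w)
      have hy : 0 < y :=
        lt_of_lt_of_le (pow_pos hδ (n + 1)) (D_pos hsing hker hδ hbound hνi hνc (n + 1) w)
      have h1 : x ≤ Pn * y := ratio_le hsing hker hδ hbound hμi hμc hνi hνc (n + 1) w
      have h2 : y ≤ Pn * x := ratio_le hsing hker hδ hbound hνi hνc hμi hμc (n + 1) w
      have hle : Real.log (x / y) ≤ Real.log Pn := by
        rw [Real.log_div hx.ne' hy.ne']
        have h3 := Real.log_le_log hx h1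
        rw [Real.log_mul hPnpos.ne' hy.ne'] at h3
        linarith
      have hge : -Real.log Pn ≤ Real.log (x / y) := by
        rw [Real.log_div hx.ne' hy.ne']
        have h3 := Real.log_le_log hy h2
        rw [Real.log_mul hPnpos.ne' hx.ne'] at h3
        linarith
      rw [Real.norm_eq_abs, abs_mul, abs_of_nonneg hx.le]
      exact mul_le_mul_of_nonneg_left (abs_le.2 ⟨hge, hle⟩) hx.le
    have hn1 : (0:ℝ) < 1 / ((n : ℝ) + 1) := by positivity
    calc ‖(1 / ((n : ℝ) + 1)) * ∑ w : Fin (n + 1) → A,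
        (μ (D (n + 1) w)).toReal *
          Real.log ((μ (D (n + 1) w)).toReal / (ν (D (n + 1) w)).toReal)‖
        = (1 / ((n : ℝ) + 1)) * ‖∑ w : Fin (n + 1) → A,
            (μ (D (n + 1) w)).toReal *
              Real.log ((μ (D (n + 1) w)).toReal / (ν (D (n + 1) w)).toReal)‖ := by
          rw [norm_mul, Real.norm_eq_abs (1 / ((n : ℝ) + 1)), abs_of_nonneg hn1.le]
      _ ≤ (1 / ((n : ℝ) + 1)) * ∑ w : Fin (n + 1) → A,
            ‖(μ (D (n + 1) w)).toReal *
              Real.log ((μ (D (n + 1) w)).toReal / (ν (D (n + 1) w)).toReal)‖ :=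
          mul_le_mul_of_nonneg_left (norm_sum_le _ _) hn1.le
      _ ≤ (1 / ((n : ℝ) + 1)) * ∑ w : Fin (n + 1) → A,
            (μ (D (n + 1) w)).toReal * Real.log Pn :=
          mul_le_mul_of_nonneg_left (Finset.sum_le_sum fun w _ => hterm w) hn1.le
      _ = (1 / ((n : ℝ) + 1)) * ((∑ w : Fin (n + 1) → A, (μ (D (n + 1) w)).toReal)
            * Real.log Pn) := by rw [Finset.sum_mul]
      _ = (1 / ((n : ℝ) + 1)) * Real.log Pn := by
          rw [sum_D hsing hker hμi hμc (n + 1), one_mul]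
      _ = (1 / ((n : ℝ) + 1)) * ∑ k ∈ Finset.range (n + 1), c k := by rw [hlogPn]
  -- convergence of the bound (Cesàro)
  have hKtend : Tendsto K atTop (nhds 1) := by
    have h4 : Tendsto (fun k => 4 * varRate P k / δ) atTop (nhds 0) := by
      have := (hcont.const_mul 4).div_const δ
      simpa using this
    have := h4.const_add 1
    simpa using this
  have hctend : Tendsto c atTop (nhds 0) := by
    have := hKtend.log one_ne_zero
    simpa using this
  have hg : Tendsto (fun n : ℕ => (1 / ((n : ℝ) + 1)) * ∑ k ∈ Finset.range (n + 1), c k)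
      atTop (nhds 0) := by
    have h1 := hctend.cesaro
    have h2 := h1.comp (tendsto_add_atTop_nat 1)
    refine h2.congr fun n => ?_
    show (((n + 1 : ℕ) : ℝ))⁻¹ * ∑ i ∈ Finset.range (n + 1), c i = _
    push_cast
    rw [one_div]
  exact squeeze_zero_norm hbnd hg

end GT
end

section
/- Let X be a stationary process on a finite alphabet A satisfying concentration of measure at exponential rate. Then X satisfies the ergodic theorem at exponential rate: there is a constant C such that for every k ≥ 1, every h : A^k → [0,1] and every ε > 0 there is g_k(ε) > 0 with ℙ( | (1/(n−k+1)) Σ_{j=0}^{n−k} h(X_{j+1}, …, X_{j+k}) − E[h(X_1, …, X_k)] | > ε ) ≤ C e^{−n g_k(ε)} for all n ≥ k. -/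
open MeasureTheory ProbabilityTheory Filter ENNReal

namespace GT

variable {A : Type*} [Fintype A] [MeasurableSpace A]

variable {A : Type*} [Fintype A] [MeasurableSpace A]

/-- The word `(X_{j+1}, …, X_{j+k})` read off from a trajectory. -/
def wordAt (j : ℤ) (k : ℕ) (ω : ℤ → A) : Fin k → A := fun i => ω (j + (i : ℕ) + 1)

/-- The ergodic theorem holds at exponential rate for `μ`. -/
def ErgodicExpRate (μ : Measure (ℤ → A)) : Prop :=
  ∃ C : ℝ, ∀ (k : ℕ), 1 ≤ k → ∀ h : (Fin k → A) → ℝ,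
    (∀ w, h w ∈ Set.Icc (0 : ℝ) 1) → ∀ ε : ℝ, 0 < ε → ∃ g : ℝ, 0 < g ∧
      ∀ n : ℕ, k ≤ n →
        (μ {ω | ε < |(1 / ((n : ℝ) - k + 1)) *
              ∑ j ∈ Finset.range (n - k + 1), h (wordAt (j : ℤ) k ω) -
            ∫ ω', h (word k ω') ∂μ|}).toReal ≤ C * Real.exp (-(n : ℝ) * g)

section Aux15
variable {A : Type*} [Fintype A] [MeasurableSpace A]

lemma aux_exists_diff_single {k : ℕ} (h : (Fin k → A) → ℝ)
    (hnc : ¬ ∀ x y : Fin k → A, h x = h y) :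
    ∃ (j : Fin k) (x y : Fin k → A), (∀ i, i ≠ j → x i = y i) ∧ h x ≠ h y := by
  classical
  by_contra hcon
  push_neg at hcon
  apply hnc
  have key : ∀ s : Finset (Fin k), ∀ x y : Fin k → A,
      (∀ i, i ∉ s → x i = y i) → h x = h y := by
    intro s
    induction s using Finset.induction_on with
    | empty =>
      intro x y hxy
      have : x = y := funext fun i => hxy i (Finset.notMem_empty i)
      rw [this]
    | @insert a s ha ih =>
      intro x y hxy
      have h1 : h x = h (Function.update x a (y a)) :=
        hcon a x (Function.update x a (y a))
          (fun i hi => (Function.update_of_ne hi (y a) x).symm)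
      rw [h1]
      apply ih
      intro i hi
      by_cases hia : i = a
      · subst hia; simp
      · rw [Function.update_of_ne hia]
        exact hxy i (by simp [Finset.mem_insert, hia, hi])
  intro x y
  exact key Finset.univ x y fun i hi => absurd (Finset.mem_univ i) hi

lemma aux_deltaSet_bddAbove {n : ℕ} (f : (Fin n → A) → ℝ) (j : Fin n) :
    BddAbove {d | ∃ a b : Fin n → A, (∀ i, i ≠ j → a i = b i) ∧ d = |f a - f b|} := by
  apply Set.Finite.bddAbove
  apply Set.Finite.subset (Set.finite_range
    (fun p : (Fin n → A) × (Fin n → A) => |f p.1 - f p.2|))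
  rintro d ⟨a, b, -, rfl⟩
  exact ⟨(a, b), rfl⟩

lemma aux_zero_mem_deltaSet {n : ℕ} (a₀ : A) (f : (Fin n → A) → ℝ) (j : Fin n) :
    (0:ℝ) ∈ {d | ∃ a b : Fin n → A, (∀ i, i ≠ j → a i = b i) ∧ d = |f a - f b|} :=
  ⟨fun _ => a₀, fun _ => a₀, fun _ _ => rfl, by simp⟩

lemma aux_deltaj_nonneg {n : ℕ} (a₀ : A) (f : (Fin n → A) → ℝ) (j : Fin n) :
    0 ≤ GT.deltaj f j := by
  unfold GT.deltaj
  exact le_csSup (aux_deltaSet_bddAbove f j) (aux_zero_mem_deltaSet a₀ f j)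

lemma aux_abs_sub_le_deltaj {n : ℕ} (f : (Fin n → A) → ℝ) (j : Fin n)
    {a b : Fin n → A} (hab : ∀ i, i ≠ j → a i = b i) :
    |f a - f b| ≤ GT.deltaj f j := by
  unfold GT.deltaj
  exact le_csSup (aux_deltaSet_bddAbove f j) ⟨a, b, hab, rfl⟩

lemma aux_deltaj_one_sub {n : ℕ} (f : (Fin n → A) → ℝ) (j : Fin n) :
    GT.deltaj (fun w => 1 - f w) j = GT.deltaj f j := by
  unfold GT.deltaj
  congr 1
  ext d
  constructor
  · rintro ⟨a, b, hab, rfl⟩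
    exact ⟨a, b, hab,
      by rw [show (1 - f a) - (1 - f b) = -(f a - f b) by ring, abs_neg]⟩
  · rintro ⟨a, b, hab, rfl⟩
    exact ⟨a, b, hab,
      by rw [show (1 - f a) - (1 - f b) = -(f a - f b) by ring, abs_neg]⟩

end Aux15
section Aux15b
set_option linter.unusedSectionVars false
open Pointwise
variable {A : Type*} [Fintype A] [MeasurableSpace A]

def blockF (a₀ : A) (k n : ℕ) (j : ℕ) (w : Fin n → A) : Fin k → A :=
  fun p => if hp : j + (p : ℕ) < n then w ⟨j + (p : ℕ), hp⟩ else a₀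

noncomputable def spacedF (a₀ : A) (k n : ℕ) (P : Finset ℕ) (c : ℝ)
    (h : (Fin k → A) → ℝ) : (Fin n → A) → ℝ :=
  fun w => c * ∑ j ∈ P, h (blockF a₀ k n j w)

lemma aux_window_ne {k : ℕ} {P : Finset ℕ}
    (hsep : ∀ j ∈ P, ∀ j' ∈ P, j < j' → j + k ≤ j')
    {j j' : ℕ} (hj : j ∈ P) (hj' : j' ∈ P) (hne : j ≠ j') {p p' : ℕ}
    (hp : p < k) (hp' : p' < k) : j + p ≠ j' + p' := by
  rcases Nat.lt_or_ge j j' with hlt | hge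
  · have := hsep j hj j' hj' hlt; omega
  · have hlt : j' < j := by omega
    have := hsep j' hj' j hj hlt; omega

lemma aux_blockF_congr {k : ℕ} {a₀ : A} {n j : ℕ} {a b : Fin n → A} {q : Fin n}
    (hab : ∀ i, i ≠ q → a i = b i)
    (hq : ∀ p : Fin k, (q : ℕ) ≠ j + (p : ℕ)) :
    blockF a₀ k n j a = blockF a₀ k n j b := by
  funext p
  unfold blockF
  split_ifs with hp
  · exact hab ⟨j + (p : ℕ), hp⟩ (fun he => hq p ((congrArg Fin.val he).symm))
  · rfl

lemma aux_spacedF_sub {k : ℕ} (a₀ : A) {n : ℕ} {P : Finset ℕ}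
    (hsep : ∀ j ∈ P, ∀ j' ∈ P, j < j' → j + k ≤ j')
    (c : ℝ) (h : (Fin k → A) → ℝ) {a b : Fin n → A} {q : Fin n}
    (hab : ∀ i, i ≠ q → a i = b i) {j : ℕ} (hj : j ∈ P) {p : Fin k}
    (hq : (q : ℕ) = j + (p : ℕ)) :
    spacedF a₀ k n P c h a - spacedF a₀ k n P c h b
      = c * (h (blockF a₀ k n j a) - h (blockF a₀ k n j b)) := by
  classical
  unfold spacedF
  rw [← mul_sub]
  congr 1
  rw [← Finset.add_sum_erase _ _ hj, ← Finset.add_sum_erase _ _ hj]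
  have hrest : ∀ j' ∈ P.erase j, h (blockF a₀ k n j' a) = h (blockF a₀ k n j' b) := by
    intro j' hj'
    have hj'P := Finset.mem_of_mem_erase hj'
    have hjne := Finset.ne_of_mem_erase hj'
    rw [aux_blockF_congr hab (fun p' => by
      rw [hq]; exact aux_window_ne hsep hj hj'P hjne.symm p.isLt p'.isLt)]
  rw [Finset.sum_congr rfl hrest]
  ring

lemma aux_exists_lift {k : ℕ} (a₀ : A) {n : ℕ} {j : ℕ} (hjk : j + k ≤ n)
    (x y : Fin k → A) {p : Fin k} (hxy : ∀ i, i ≠ p → x i = y i) (q : Fin n)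
    (hq : (q : ℕ) = j + (p : ℕ)) :
    ∃ a b : Fin n → A, (∀ i, i ≠ q → a i = b i) ∧
      blockF a₀ k n j a = x ∧ blockF a₀ k n j b = y := by
  classical
  set a : Fin n → A := fun i => if h2 : j ≤ (i : ℕ) ∧ (i : ℕ) < j + k
      then x ⟨(i : ℕ) - j, by omega⟩ else a₀ with hadef
  refine ⟨a, Function.update a q (y p),
    fun i hi => (Function.update_of_ne hi _ _).symm, ?_, ?_⟩
  · funext p'
    have hlt : j + (p' : ℕ) < n := by have := p'.isLt; omega
    have h2 : j ≤ j + (p' : ℕ) ∧ j + (p' : ℕ) < j + k :=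
      ⟨Nat.le_add_right _ _, by have := p'.isLt; omega⟩
    simp only [blockF, hadef, dif_pos hlt, dif_pos h2]
    congr 1
    exact Fin.ext (by simp)
  · funext p'
    have hlt : j + (p' : ℕ) < n := by have := p'.isLt; omega
    by_cases hpp : p' = p
    · subst hpp
      have hqq : (⟨j + (p' : ℕ), hlt⟩ : Fin n) = q := Fin.ext (by rw [hq])
      simp only [blockF, dif_pos hlt]
      rw [hqq, Function.update_self]
    · have hne : (⟨j + (p' : ℕ), hlt⟩ : Fin n) ≠ q := by
        intro he
        apply hpp
        have hval : j + (p' : ℕ) = (q : ℕ) := congrArg Fin.val he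
        exact Fin.ext (by omega)
      have h2 : j ≤ j + (p' : ℕ) ∧ j + (p' : ℕ) < j + k :=
        ⟨Nat.le_add_right _ _, by have := p'.isLt; omega⟩
      simp only [blockF, dif_pos hlt, Function.update_of_ne hne, hadef, dif_pos h2]
      rw [show ((⟨j + (p' : ℕ) - j, by omega⟩ : Fin k)) = p' from Fin.ext (by simp)]
      exact hxy p' hpp

lemma aux_deltaj_spacedF_covered {k : ℕ} (a₀ : A) {n : ℕ} {P : Finset ℕ}
    (hsep : ∀ j ∈ P, ∀ j' ∈ P, j < j' → j + k ≤ j')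
    (hPn : ∀ j ∈ P, j + k ≤ n) {c : ℝ} (hc : 0 ≤ c)
    (h : (Fin k → A) → ℝ) {q : Fin n} {j : ℕ} (hj : j ∈ P) {p : Fin k}
    (hq : (q : ℕ) = j + (p : ℕ)) :
    GT.deltaj (spacedF a₀ k n P c h) q = c * GT.deltaj h p := by
  unfold GT.deltaj
  have hset : {d | ∃ a b : Fin n → A, (∀ i, i ≠ q → a i = b i)
        ∧ d = |spacedF a₀ k n P c h a - spacedF a₀ k n P c h b|}
      = c • {d | ∃ x y : Fin k → A, (∀ i, i ≠ p → x i = y i) ∧ d = |h x - h y|} := by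
    ext d
    constructor
    · rintro ⟨a, b, hab, rfl⟩
      refine ⟨|h (blockF a₀ k n j a) - h (blockF a₀ k n j b)|,
        ⟨blockF a₀ k n j a, blockF a₀ k n j b, ?_, rfl⟩, ?_⟩
      · intro p' hp'
        unfold blockF
        split_ifs with hplt
        · apply hab
          intro he
          apply hp'
          have hval : j + (p' : ℕ) = (q : ℕ) := congrArg Fin.val he
          rw [hq] at hval
          exact Fin.ext (by omega)
        · rfl
      · simp only [smul_eq_mul]
        rw [aux_spacedF_sub a₀ hsep c h hab hj hq, abs_mul, abs_of_nonneg hc]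
    · rintro ⟨d₀, ⟨x, y, hxy, rfl⟩, rfl⟩
      obtain ⟨a, b, hab, hba, hbb⟩ := aux_exists_lift a₀ (hPn j hj) x y hxy q hq
      refine ⟨a, b, hab, ?_⟩
      simp only [smul_eq_mul]
      rw [aux_spacedF_sub a₀ hsep c h hab hj hq, hba, hbb, abs_mul, abs_of_nonneg hc]
  rw [hset, Real.sSup_smul_of_nonneg hc, smul_eq_mul]

lemma aux_deltaj_spacedF_zero {k : ℕ} (a₀ : A) {n : ℕ} {P : Finset ℕ}
    {c : ℝ} (h : (Fin k → A) → ℝ) {q : Fin n}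
    (huncov : ∀ j ∈ P, ∀ p : Fin k, (q : ℕ) ≠ j + (p : ℕ)) :
    GT.deltaj (spacedF a₀ k n P c h) q = 0 := by
  unfold GT.deltaj
  have hset : {d | ∃ a b : Fin n → A, (∀ i, i ≠ q → a i = b i)
        ∧ d = |spacedF a₀ k n P c h a - spacedF a₀ k n P c h b|} = {(0:ℝ)} := by
    ext d
    simp only [Set.mem_setOf_eq, Set.mem_singleton_iff]
    constructor
    · rintro ⟨a, b, hab, rfl⟩
      have heq : spacedF a₀ k n P c h a = spacedF a₀ k n P c h b := by
        unfold spacedF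
        congr 1
        apply Finset.sum_congr rfl
        intro j hj
        rw [aux_blockF_congr hab (huncov j hj)]
      rw [heq, sub_self, abs_zero]
    · rintro rfl
      exact ⟨fun _ => a₀, fun _ => a₀, fun _ _ => rfl, by simp⟩
  rw [hset, csSup_singleton]

end Aux15b
section Aux15c
set_option linter.unusedSectionVars false
open Pointwise
variable {A : Type*} [Fintype A] [MeasurableSpace A]

lemma aux_sum_deltaj_spacedF {k : ℕ} (a₀ : A) {n : ℕ} {P : Finset ℕ}
    (hsep : ∀ j ∈ P, ∀ j' ∈ P, j < j' → j + k ≤ j')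
    (hPn : ∀ j ∈ P, j + k ≤ n) {c : ℝ} (hc : 0 ≤ c) (h : (Fin k → A) → ℝ)
    (φ : ℝ → ℝ) (hφ : φ 0 = 0) :
    ∑ q : Fin n, φ (GT.deltaj (spacedF a₀ k n P c h) q)
      = (P.card : ℝ) * ∑ p : Fin k, φ (c * GT.deltaj h p) := by
  classical
  have key : ∀ q : Fin n, φ (GT.deltaj (spacedF a₀ k n P c h) q)
      = ∑ j ∈ P, ∑ p : Fin k,
          if (q : ℕ) = j + (p : ℕ) then φ (c * GT.deltaj h p) else 0 := by
    intro q
    by_cases hcov : ∃ j ∈ P, ∃ p : Fin k, (q : ℕ) = j + (p : ℕ)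
    · obtain ⟨j₀, hj₀, p₀, hqp⟩ := hcov
      rw [aux_deltaj_spacedF_covered a₀ hsep hPn hc h hj₀ hqp]
      symm
      rw [Finset.sum_eq_single j₀ (fun j hj hne => Finset.sum_eq_zero fun p _ =>
            if_neg (by
              rw [hqp]
              exact aux_window_ne hsep hj₀ hj hne.symm p₀.isLt p.isLt))
          (fun hj => absurd hj₀ hj),
        Finset.sum_eq_single p₀ (fun p _ hne => if_neg fun hqe => hne (Fin.ext (by omega)))
          (fun hp => absurd (Finset.mem_univ p₀) hp),
        if_pos hqp]
    · push_neg at hcov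
      rw [aux_deltaj_spacedF_zero a₀ h (fun j hj p => hcov j hj p), hφ]
      symm
      apply Finset.sum_eq_zero
      intro j hj
      apply Finset.sum_eq_zero
      intro p _
      rw [if_neg (hcov j hj p)]
  rw [Finset.sum_congr rfl fun q _ => key q, Finset.sum_comm]
  rw [Finset.sum_congr rfl (fun j (hj : j ∈ P) => Finset.sum_comm)]
  have inner : ∀ j ∈ P, ∀ p : Fin k,
      (∑ q : Fin n, if (q : ℕ) = j + (p : ℕ) then φ (c * GT.deltaj h p) else 0)
        = φ (c * GT.deltaj h p) := by
    intro j hj p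
    have hlt : j + (p : ℕ) < n := by have := p.isLt; have := hPn j hj; omega
    rw [Finset.sum_eq_single (⟨j + (p : ℕ), hlt⟩ : Fin n)
        (fun q _ hne => if_neg fun he => hne (Fin.ext he))
        (fun hq => absurd (Finset.mem_univ _) hq),
      if_pos rfl]
  rw [Finset.sum_congr rfl fun j hj => Finset.sum_congr rfl fun p _ => inner j hj p,
    Finset.sum_const, nsmul_eq_mul]

lemma aux_delta1_spacedF {k : ℕ} (a₀ : A) {n : ℕ} {P : Finset ℕ}
    (hsep : ∀ j ∈ P, ∀ j' ∈ P, j < j' → j + k ≤ j')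
    (hPn : ∀ j ∈ P, j + k ≤ n) {c : ℝ} (hc : 0 ≤ c) (h : (Fin k → A) → ℝ) :
    GT.delta1 (spacedF a₀ k n P c h) = (P.card : ℝ) * (c * GT.delta1 h) := by
  have hs := aux_sum_deltaj_spacedF a₀ hsep hPn hc h (fun x => x) rfl
  unfold GT.delta1
  rw [hs]
  congr 1
  rw [Finset.mul_sum]

lemma aux_delta2sq_spacedF {k : ℕ} (a₀ : A) {n : ℕ} {P : Finset ℕ}
    (hsep : ∀ j ∈ P, ∀ j' ∈ P, j < j' → j + k ≤ j')
    (hPn : ∀ j ∈ P, j + k ≤ n) {c : ℝ} (hc : 0 ≤ c) (h : (Fin k → A) → ℝ) :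
    GT.delta2sq (spacedF a₀ k n P c h) = (P.card : ℝ) * (c ^ 2 * GT.delta2sq h) := by
  have hs := aux_sum_deltaj_spacedF a₀ hsep hPn hc h (fun x => x ^ 2) (by norm_num)
  unfold GT.delta2sq
  rw [hs]
  congr 1
  rw [Finset.mul_sum]
  apply Finset.sum_congr rfl
  intro p _
  ring

lemma aux_delta1_one_sub {k : ℕ} (h : (Fin k → A) → ℝ) :
    GT.delta1 (fun x => 1 - h x) = GT.delta1 h := by
  unfold GT.delta1
  exact Finset.sum_congr rfl fun p _ => aux_deltaj_one_sub h p

lemma aux_delta2sq_one_sub {k : ℕ} (h : (Fin k → A) → ℝ) :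
    GT.delta2sq (fun x => 1 - h x) = GT.delta2sq h := by
  unfold GT.delta2sq
  exact Finset.sum_congr rfl fun p _ => by rw [aux_deltaj_one_sub h p]

lemma aux_spacedF_word {k : ℕ} (a₀ : A) {n : ℕ} {P : Finset ℕ}
    (hPn : ∀ j ∈ P, j + k ≤ n) (c : ℝ) (h : (Fin k → A) → ℝ) (ω : ℤ → A) :
    spacedF a₀ k n P c h (GT.word n ω) = c * ∑ j ∈ P, h (GT.wordAt (j : ℤ) k ω) := by
  unfold spacedF
  congr 1
  apply Finset.sum_congr rfl
  intro j hj
  congr 1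
  funext p
  have hlt : j + (p : ℕ) < n := by have := p.isLt; have := hPn j hj; omega
  simp only [blockF, dif_pos hlt, GT.word, GT.wordAt]
  congr 1 <;> (push_cast; ring)

/-- the shift as a measurable equivalence -/
def shiftE : (ℤ → A) ≃ᵐ (ℤ → A) :=
{ toEquiv := ⟨GT.shift, fun ω n => ω (n - 1),
    fun ω => funext fun n => by simp [GT.shift],
    fun ω => funext fun n => by simp [GT.shift]⟩,
  measurable_toFun := measurable_pi_lambda _ fun n => measurable_pi_apply (n + 1),
  measurable_invFun := measurable_pi_lambda _ fun n => measurable_pi_apply (n - 1) }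

/-- iterated shift as a measurable equivalence -/
def Sj (j : ℕ) : (ℤ → A) ≃ᵐ (ℤ → A) :=
{ toEquiv := ⟨fun ω t => ω (t + j), fun ω t => ω (t - j),
    fun ω => funext fun t => by simp,
    fun ω => funext fun t => by simp⟩,
  measurable_toFun := measurable_pi_lambda _ fun t => measurable_pi_apply (t + j),
  measurable_invFun := measurable_pi_lambda _ fun t => measurable_pi_apply (t - j) }

lemma aux_measurePreserving_Sj (μ : MeasureTheory.Measure (ℤ → A))
    (hstat : GT.ShiftInvariant μ) (j : ℕ) :
    MeasureTheory.MeasurePreserving (Sj (A := A) j) μ μ := by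
  induction j with
  | zero =>
    have hid : ⇑(Sj (A := A) 0) = id := funext fun ω => funext fun t => by
      show ω (t + ((0 : ℕ) : ℤ)) = ω t
      norm_num
    rw [hid]
    exact MeasureTheory.MeasurePreserving.id μ
  | succ j ih =>
    have hcomp : ⇑(Sj (A := A) (j + 1)) = GT.shift ∘ ⇑(Sj (A := A) j) :=
      funext fun ω => funext fun t => by
        show ω (t + ((j + 1 : ℕ) : ℤ)) = ω ((t + 1) + (j : ℕ))
        congr 1
        push_cast
        ring
    have hshift : MeasureTheory.MeasurePreserving (GT.shift (A := A)) μ μ :=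
      ⟨(shiftE (A := A)).measurable, hstat⟩
    have := hshift.comp ih
    rwa [← hcomp] at this

lemma aux_wordAt_Sj (j k : ℕ) (ω : ℤ → A) :
    GT.wordAt (j : ℤ) k ω = GT.word k (Sj (A := A) j ω) := by
  funext p
  show ω ((j : ℤ) + (p : ℕ) + 1) = ω ((((p : ℕ) : ℤ) + 1) + (j : ℕ))
  congr 1
  ring

lemma aux_aesm_comp_Sj_iff (μ : MeasureTheory.Measure (ℤ → A))
    (hstat : GT.ShiftInvariant μ) (j : ℕ) (G : (ℤ → A) → ℝ) :
    MeasureTheory.AEStronglyMeasurable (G ∘ (Sj (A := A) j)) μ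
      ↔ MeasureTheory.AEStronglyMeasurable G μ :=
  (aux_measurePreserving_Sj μ hstat j).aestronglyMeasurable_comp_iff
    (Sj (A := A) j).measurableEmbedding

lemma aux_integral_comp_Sj (μ : MeasureTheory.Measure (ℤ → A))
    (hstat : GT.ShiftInvariant μ) (j : ℕ) (G : (ℤ → A) → ℝ) :
    ∫ ω, G (Sj (A := A) j ω) ∂μ = ∫ ω, G ω ∂μ :=
  (aux_measurePreserving_Sj μ hstat j).integral_comp
    (Sj (A := A) j).measurableEmbedding G

end Aux15c
section Aux15d
set_option linter.unusedSectionVars false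
set_option linter.unreachableTactic false
set_option linter.unusedTactic false
set_option maxHeartbeats 1000000
open Pointwise MeasureTheory
variable {A : Type*} [Fintype A] [MeasurableSpace A]

lemma aux_aesm_phi (μ : Measure (ℤ → A)) [IsProbabilityMeasure μ]
    (hstat : GT.ShiftInvariant μ)
    (C₀ : ℝ) (g₀ : ℝ → ℝ → ℝ) (hg₀ : ∀ ε t, 0 < ε → 0 < t → 0 < g₀ ε t)
    (hCb : ∀ (n : ℕ), 1 ≤ n → ∀ (f : (Fin n → A) → ℝ) (ε : ℝ), 0 < ε →
      (μ {ω | ε < |f (GT.word n ω) - ∫ ω', f (GT.word n ω') ∂μ|}).toReal ≤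
        C₀ * Real.exp (-(g₀ ε (GT.delta1 f)) / GT.delta2sq f))
    {k : ℕ} (hk0 : 0 < k) (a₀ : A) (h : (Fin k → A) → ℝ)
    (hh01 : ∀ w, h w ∈ Set.Icc (0:ℝ) 1)
    (ht : 0 < GT.delta1 h) (hd : 0 < GT.delta2sq h) :
    AEStronglyMeasurable (fun ω => h (GT.word k ω)) μ := by
  classical
  set C₁ := max C₀ 0 with hC₁def
  have hC₁0 : 0 ≤ C₁ := le_max_right _ _
  set c := g₀ (1/4) (GT.delta1 h) / GT.delta2sq h with hcdef
  have hc : 0 < c := div_pos (hg₀ _ _ (by norm_num) ht) hd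
  -- the spaced averages are AESM as soon as the concentration bound beats 1
  have hAESM : ∀ R : ℕ, 1 ≤ R → 2 * C₁ * Real.exp (-(c * R)) < 1 →
      AEStronglyMeasurable
        (fun ω => (1/(R:ℝ)) * ∑ r ∈ Finset.range R,
          h (GT.wordAt ((r * k : ℕ) : ℤ) k ω)) μ := by
    intro R hR hsmall
    by_contra hnm
    have hR0 : ((R:ℕ):ℝ) ≠ 0 := Nat.cast_ne_zero.mpr (by omega)
    set Pb : Finset ℕ := (Finset.range R).image (fun r => r * k) with hPb
    have hinj : Function.Injective (fun r : ℕ => r * k) :=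
      fun r r' e => Nat.eq_of_mul_eq_mul_right hk0 e
    have hsep : ∀ j ∈ Pb, ∀ j' ∈ Pb, j < j' → j + k ≤ j' := by
      intro j hj j' hj' hlt
      rw [hPb, Finset.mem_image] at hj hj'
      obtain ⟨r, hr, rfl⟩ := hj
      obtain ⟨r', hr', rfl⟩ := hj'
      have hrr : r < r' := by
        by_contra hh
        push_neg at hh
        exact absurd (Nat.mul_le_mul_right k hh) (by omega)
      calc r * k + k = (r + 1) * k := by ring
      _ ≤ r' * k := Nat.mul_le_mul_right k hrr
    have hPn : ∀ j ∈ Pb, j + k ≤ R * k := by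
      intro j hj
      rw [hPb, Finset.mem_image] at hj
      obtain ⟨r, hr, rfl⟩ := hj
      rw [Finset.mem_range] at hr
      calc r * k + k = (r + 1) * k := by ring
      _ ≤ R * k := Nat.mul_le_mul_right k hr
    have hcard : Pb.card = R := by
      rw [hPb, Finset.card_image_of_injective _ hinj, Finset.card_range]
    have funeq : (fun ω => spacedF a₀ k (R*k) Pb (1/(R:ℝ)) h (GT.word (R*k) ω))
        = fun ω => (1/(R:ℝ)) * ∑ r ∈ Finset.range R,
            h (GT.wordAt ((r * k : ℕ) : ℤ) k ω) := by
      funext ω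
      rw [aux_spacedF_word a₀ hPn]
      congr 1
      rw [hPb]
      exact Finset.sum_image (fun x _ y _ e => hinj e)
    have funeq' : (fun ω => spacedF a₀ k (R*k) Pb (1/(R:ℝ)) (fun x => 1 - h x) (GT.word (R*k) ω))
        = fun ω => 1 - (1/(R:ℝ)) * ∑ r ∈ Finset.range R,
            h (GT.wordAt ((r * k : ℕ) : ℤ) k ω) := by
      funext ω
      rw [aux_spacedF_word a₀ hPn]
      rw [hPb, Finset.sum_image (fun x _ y _ e => hinj e)]
      rw [Finset.sum_sub_distrib, Finset.sum_const, Finset.card_range, nsmul_eq_mul,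
        mul_one, mul_sub, one_div_mul_cancel hR0]
    have hnm1 : ¬ Integrable (fun ω => spacedF a₀ k (R*k) Pb (1/(R:ℝ)) h (GT.word (R*k) ω)) μ := by
      rw [funeq]
      exact fun hI => hnm hI.aestronglyMeasurable
    have hint0 : ∫ ω', spacedF a₀ k (R*k) Pb (1/(R:ℝ)) h (GT.word (R*k) ω') ∂μ = 0 :=
      integral_undef hnm1
    have hnm2 : ¬ Integrable (fun ω => spacedF a₀ k (R*k) Pb (1/(R:ℝ)) (fun x => 1 - h x) (GT.word (R*k) ω)) μ := by
      rw [funeq']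
      intro hI
      apply hnm
      have hI2 := hI.aestronglyMeasurable
      have h2 : (fun ω => (1/(R:ℝ)) * ∑ r ∈ Finset.range R, h (GT.wordAt ((r * k : ℕ) : ℤ) k ω))
          = fun ω => 1 - (1 - (1/(R:ℝ)) * ∑ r ∈ Finset.range R, h (GT.wordAt ((r * k : ℕ) : ℤ) k ω)) := by
        funext ω; ring
      rw [h2]
      exact aestronglyMeasurable_const.sub hI2
    have hint0' : ∫ ω', spacedF a₀ k (R*k) Pb (1/(R:ℝ)) (fun x => 1 - h x) (GT.word (R*k) ω') ∂μ = 0 :=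
      integral_undef hnm2
    have hnk : 1 ≤ R * k := Nat.mul_pos (by omega) hk0
    have hc01 : (0:ℝ) ≤ 1/(R:ℝ) := by positivity
    have hB1 := hCb (R*k) hnk (spacedF a₀ k (R*k) Pb (1/(R:ℝ)) h) (1/4) (by norm_num)
    have hB2 := hCb (R*k) hnk (spacedF a₀ k (R*k) Pb (1/(R:ℝ)) (fun x => 1 - h x)) (1/4) (by norm_num)
    have hd1 : GT.delta1 (spacedF a₀ k (R*k) Pb (1/(R:ℝ)) h) = GT.delta1 h := by
      rw [aux_delta1_spacedF a₀ hsep hPn hc01 h, hcard]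
      field_simp
    have hd2 : GT.delta2sq (spacedF a₀ k (R*k) Pb (1/(R:ℝ)) h) = GT.delta2sq h / R := by
      rw [aux_delta2sq_spacedF a₀ hsep hPn hc01 h, hcard]
      field_simp
    have hd1' : GT.delta1 (spacedF a₀ k (R*k) Pb (1/(R:ℝ)) (fun x => 1 - h x)) = GT.delta1 h := by
      rw [aux_delta1_spacedF a₀ hsep hPn hc01 _, hcard, aux_delta1_one_sub h]
      field_simp
    have hd2' : GT.delta2sq (spacedF a₀ k (R*k) Pb (1/(R:ℝ)) (fun x => 1 - h x)) = GT.delta2sq h / R := by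
      rw [aux_delta2sq_spacedF a₀ hsep hPn hc01 _, hcard, aux_delta2sq_one_sub h]
      field_simp
    rw [hint0, hd1, hd2] at hB1
    rw [hint0', hd1', hd2'] at hB2
    have hexp : -(g₀ (1/4) (GT.delta1 h)) / (GT.delta2sq h / R) = -(c * R) := by
      rw [hcdef]
      field_simp
    rw [hexp] at hB1 hB2
    -- covering
    have hcover : (Set.univ : Set (ℤ → A)) ⊆
        {ω | 1/4 < |spacedF a₀ k (R*k) Pb (1/(R:ℝ)) h (GT.word (R*k) ω) - 0|} ∪
        {ω | 1/4 < |spacedF a₀ k (R*k) Pb (1/(R:ℝ)) (fun x => 1 - h x) (GT.word (R*k) ω) - 0|} := by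
      intro ω _
      have hv1 : spacedF a₀ k (R*k) Pb (1/(R:ℝ)) h (GT.word (R*k) ω)
          = (1/(R:ℝ)) * ∑ r ∈ Finset.range R, h (GT.wordAt ((r * k : ℕ) : ℤ) k ω) :=
        congrFun funeq ω
      have hv2 : spacedF a₀ k (R*k) Pb (1/(R:ℝ)) (fun x => 1 - h x) (GT.word (R*k) ω)
          = 1 - (1/(R:ℝ)) * ∑ r ∈ Finset.range R, h (GT.wordAt ((r * k : ℕ) : ℤ) k ω) :=
        congrFun funeq' ω
      set v := (1/(R:ℝ)) * ∑ r ∈ Finset.range R, h (GT.wordAt ((r * k : ℕ) : ℤ) k ω) with hv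
      have hv0 : 0 ≤ v := by
        apply mul_nonneg (by positivity)
        exact Finset.sum_nonneg fun r _ => (hh01 _).1
      have hvle : v ≤ 1 := by
        rw [hv]
        have hsle : ∑ r ∈ Finset.range R, h (GT.wordAt ((r * k : ℕ) : ℤ) k ω) ≤ (R:ℝ) := by
          calc ∑ r ∈ Finset.range R, h (GT.wordAt ((r * k : ℕ) : ℤ) k ω)
              ≤ ∑ _r ∈ Finset.range R, (1:ℝ) := Finset.sum_le_sum fun r _ => (hh01 _).2
          _ = (R:ℝ) := by simp
        calc (1/(R:ℝ)) * ∑ r ∈ Finset.range R, h (GT.wordAt ((r * k : ℕ) : ℤ) k ω)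
            ≤ (1/(R:ℝ)) * (R:ℝ) := by
              apply mul_le_mul_of_nonneg_left hsle (by positivity)
        _ = 1 := one_div_mul_cancel hR0
      rcases le_or_gt v (1/4 : ℝ) with hv4 | hv4
      · right
        simp only [Set.mem_setOf_eq]
        rw [hv2, sub_zero, abs_of_nonneg (by linarith : (0:ℝ) ≤ 1 - v)]
        linarith
      · left
        simp only [Set.mem_setOf_eq]
        rw [hv1, sub_zero, abs_of_nonneg hv0]
        exact hv4
    have hne1 : μ {ω | 1/4 < |spacedF a₀ k (R*k) Pb (1/(R:ℝ)) h (GT.word (R*k) ω) - 0|} ≠ ⊤ :=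
      (lt_of_le_of_lt prob_le_one one_lt_top).ne
    have hne2 : μ {ω | 1/4 < |spacedF a₀ k (R*k) Pb (1/(R:ℝ)) (fun x => 1 - h x) (GT.word (R*k) ω) - 0|} ≠ ⊤ :=
      (lt_of_le_of_lt prob_le_one one_lt_top).ne
    have huniv : (1:ℝ≥0∞) ≤
        μ {ω | 1/4 < |spacedF a₀ k (R*k) Pb (1/(R:ℝ)) h (GT.word (R*k) ω) - 0|}
        + μ {ω | 1/4 < |spacedF a₀ k (R*k) Pb (1/(R:ℝ)) (fun x => 1 - h x) (GT.word (R*k) ω) - 0|} := by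
      calc (1:ℝ≥0∞) = μ Set.univ := (measure_univ (μ := μ)).symm
      _ ≤ μ (_ ∪ _) := measure_mono hcover
      _ ≤ _ := measure_union_le _ _
    have hto : (1:ℝ) ≤
        (μ {ω | 1/4 < |spacedF a₀ k (R*k) Pb (1/(R:ℝ)) h (GT.word (R*k) ω) - 0|}).toReal
        + (μ {ω | 1/4 < |spacedF a₀ k (R*k) Pb (1/(R:ℝ)) (fun x => 1 - h x) (GT.word (R*k) ω) - 0|}).toReal := by
      have hsum : μ {ω | 1/4 < |spacedF a₀ k (R*k) Pb (1/(R:ℝ)) h (GT.word (R*k) ω) - 0|}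
          + μ {ω | 1/4 < |spacedF a₀ k (R*k) Pb (1/(R:ℝ)) (fun x => 1 - h x) (GT.word (R*k) ω) - 0|} ≠ ⊤ :=
        ENNReal.add_ne_top.mpr ⟨hne1, hne2⟩
      have := ENNReal.toReal_mono hsum huniv
      rwa [ENNReal.toReal_one, ENNReal.toReal_add hne1 hne2] at this
    have hb1' : (μ {ω | 1/4 < |spacedF a₀ k (R*k) Pb (1/(R:ℝ)) h (GT.word (R*k) ω) - 0|}).toReal
        ≤ C₁ * Real.exp (-(c * R)) :=
      hB1.trans (mul_le_mul_of_nonneg_right (le_max_left _ _) (Real.exp_nonneg _))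
    have hb2' : (μ {ω | 1/4 < |spacedF a₀ k (R*k) Pb (1/(R:ℝ)) (fun x => 1 - h x) (GT.word (R*k) ω) - 0|}).toReal
        ≤ C₁ * Real.exp (-(c * R)) :=
      hB2.trans (mul_le_mul_of_nonneg_right (le_max_left _ _) (Real.exp_nonneg _))
    linarith
  -- choose a good threshold R₀
  set R₀ := max 1 (⌈Real.log (2*C₁+1)/c⌉₊ + 1) with hR₀def
  have hsm : ∀ R : ℕ, R₀ ≤ R → 2 * C₁ * Real.exp (-(c * R)) < 1 := by
    intro R hRR
    have hceil : ⌈Real.log (2*C₁+1)/c⌉₊ + 1 ≤ R := le_trans (le_max_right _ _) hRR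
    have hR1 : (⌈Real.log (2*C₁+1)/c⌉₊ : ℝ) < (R:ℝ) := by exact_mod_cast by omega
    have hlog : Real.log (2*C₁+1) < c * R := by
      have h1 : Real.log (2*C₁+1)/c ≤ (⌈Real.log (2*C₁+1)/c⌉₊ : ℝ) := Nat.le_ceil _
      have h2 : Real.log (2*C₁+1)/c < (R:ℝ) := lt_of_le_of_lt h1 hR1
      calc Real.log (2*C₁+1) = (Real.log (2*C₁+1)/c) * c := by field_simp
      _ < (R:ℝ) * c := mul_lt_mul_of_pos_right h2 hc
      _ = c * R := mul_comm _ _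
    have hpos : (0:ℝ) < 2*C₁+1 := by linarith
    have hexp : 2*C₁+1 ≤ Real.exp (c * R) := by
      rw [← Real.exp_log hpos]
      exact Real.exp_le_exp.mpr hlog.le
    have heq1 : 2*C₁*Real.exp (-(c * (R:ℝ))) = 2*C₁ / Real.exp (c * (R:ℝ)) := by
      rw [Real.exp_neg]; ring
    have hle1 : 2*C₁/Real.exp (c * (R:ℝ)) ≤ 2*C₁/(2*C₁+1) :=
      div_le_div_of_nonneg_left (by linarith) hpos hexp
    have hlt1 : 2*C₁/(2*C₁+1) < 1 := (div_lt_one hpos).mpr (by linarith)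
    linarith
  have hR₀1 : 1 ≤ R₀ := le_max_left _ _
  have hΦ0 := hAESM R₀ hR₀1 (hsm R₀ le_rfl)
  have hΦ1 := hAESM (R₀+1) (by omega) (hsm _ (by omega))
  have hR0r : ((R₀:ℕ):ℝ) ≠ 0 := Nat.cast_ne_zero.mpr (by omega)
  have hR1r : ((R₀+1:ℕ):ℝ) ≠ 0 := Nat.cast_ne_zero.mpr (by omega)
  have htel : (fun ω => h (GT.wordAt ((R₀ * k : ℕ) : ℤ) k ω))
      = fun ω => ((R₀+1:ℕ):ℝ) * ((1/((R₀+1:ℕ):ℝ)) * ∑ r ∈ Finset.range (R₀+1),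
            h (GT.wordAt ((r * k : ℕ) : ℤ) k ω))
        - ((R₀:ℕ):ℝ) * ((1/((R₀:ℕ):ℝ)) * ∑ r ∈ Finset.range R₀,
            h (GT.wordAt ((r * k : ℕ) : ℤ) k ω)) := by
    funext ω
    rw [Finset.sum_range_succ]
    field_simp
    ring
  have hstep : AEStronglyMeasurable (fun ω => h (GT.wordAt ((R₀ * k : ℕ) : ℤ) k ω)) μ := by
    rw [htel]
    exact (hΦ1.const_mul _).sub (hΦ0.const_mul _)
  have hcompj : (fun ω => h (GT.wordAt ((R₀ * k : ℕ) : ℤ) k ω))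
      = (fun ω => h (GT.word k ω)) ∘ (Sj (A := A) (R₀ * k)) := by
    funext ω
    simp only [Function.comp_apply]
    rw [aux_wordAt_Sj]
  rw [hcompj] at hstep
  exact (aux_aesm_comp_Sj_iff μ hstat (R₀ * k) _).mp hstep

end Aux15d
lemma aux_arith_term {R M F mm : ℝ} : (R/M)*(F - mm) = (1/M)*(R*F) - (R/M)*mm := by
  ring

lemma aux_arith_d2 {R d : ℝ} (hR : R ≠ 0) : R * ((1/R)^2 * d) = d / R := by
  field_simp

lemma aux_arith_exp {g d R : ℝ} (hd : d ≠ 0) (hR : R ≠ 0) :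
    -g / (d / R) = -(g / d * R) := by
  field_simp

set_option linter.unusedSectionVars false in
set_option maxHeartbeats 2000000 in
/-- Concentration of measure at exponential rate implies the ergodic theorem at
exponential rate (inequality (2) implies inequality (3) in Gallo–Takahashi). -/
theorem statement15 (μ : Measure (ℤ → A)) (hμ : IsProbabilityMeasure μ)
    (hstat : ShiftInvariant μ) (hconc : ConcExpRate μ) : ErgodicExpRate μ := by
  classical
  haveI := hμ
  have hAne : Nonempty A := by
    by_contra hA
    rw [not_nonempty_iff] at hA
    have hIE : IsEmpty (ℤ → A) := ⟨fun ω => hA.false (ω 0)⟩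
    have h1 : (Set.univ : Set (ℤ → A)) = ∅ := Set.univ_eq_empty_iff.mpr hIE
    have h2 := measure_univ (μ := μ)
    rw [h1, measure_empty] at h2
    exact zero_ne_one h2
  have a₀ : A := Classical.arbitrary A
  obtain ⟨C₀, g₀, hg₀, hCb⟩ := id hconc
  set C₁ := max C₀ 0 with hC₁def
  have hC₁0 : 0 ≤ C₁ := le_max_right _ _
  have hC₀C₁ : C₀ ≤ C₁ := le_max_left _ _
  refine ⟨C₁ + Real.exp 1, ?_⟩
  have hCpos : 0 < C₁ + Real.exp 1 := by positivity
  have hCgt1 : 1 < C₁ + Real.exp 1 := by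
    have := Real.add_one_lt_exp (by norm_num : (1:ℝ) ≠ 0)
    linarith
  have hlogC : 1 ≤ Real.log (C₁ + Real.exp 1) := by
    have h1 : Real.exp 1 ≤ C₁ + Real.exp 1 := by linarith
    calc (1:ℝ) = Real.log (Real.exp 1) := (Real.log_exp 1).symm
    _ ≤ Real.log (C₁ + Real.exp 1) := Real.log_le_log (Real.exp_pos 1) h1
  intro k hk h hh01 ε hε
  have hk0 : 0 < k := hk
  by_cases hnc : ∀ x y : Fin k → A, h x = h y
  · -- h is constant: the event is empty
    refine ⟨1, one_pos, ?_⟩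
    intro n hn
    have hMne : ((n:ℝ) - k + 1) ≠ 0 := by
      have : (k:ℝ) ≤ (n:ℝ) := Nat.cast_le.mpr hn
      linarith
    haveI : Nonempty (ℤ → A) := ⟨fun _ => a₀⟩
    set v := h (word k (Classical.arbitrary (ℤ → A))) with hv
    have hempty : {ω | ε < |(1 / ((n : ℝ) - k + 1)) *
          ∑ j ∈ Finset.range (n - k + 1), h (wordAt (j : ℤ) k ω) -
        ∫ ω', h (word k ω') ∂μ|} = ∅ := by
      ext ω
      simp only [Set.mem_setOf_eq, Set.mem_empty_iff_false, iff_false, not_lt]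
      have hsum : ∑ j ∈ Finset.range (n - k + 1), h (wordAt (j : ℤ) k ω)
          = ((n - k + 1 : ℕ) : ℝ) * v := by
        rw [Finset.sum_congr rfl fun j _ => hnc _ _, Finset.sum_const,
          Finset.card_range, nsmul_eq_mul]
      have hint : ∫ ω', h (word k ω') ∂μ = v := by
        rw [show (fun ω' => h (word k ω')) = fun _ => v from funext fun ω' => hnc _ _]
        simp [integral_const, measure_univ]
      have hcast : ((n - k + 1 : ℕ) : ℝ) = (n:ℝ) - k + 1 := by
        rw [Nat.cast_add, Nat.cast_sub hn, Nat.cast_one]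
      rw [hsum, hint, hcast, one_div, inv_mul_cancel_left₀ hMne]
      simp [le_of_lt hε]
    rw [hempty, measure_empty]
    simp only [ENNReal.toReal_zero]
    positivity
  · -- main case : h not constant
    obtain ⟨j₀, x₀, y₀, hxy₀, hne₀⟩ := aux_exists_diff_single h hnc
    have hδ0 : 0 < deltaj h j₀ :=
      lt_of_lt_of_le (abs_pos.mpr (sub_ne_zero.mpr hne₀)) (aux_abs_sub_le_deltaj h j₀ hxy₀)
    have ht : 0 < delta1 h := by
      have hs := Finset.single_le_sum (f := fun j => deltaj h j)
        (fun i _ => aux_deltaj_nonneg a₀ h i) (Finset.mem_univ j₀)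
      unfold delta1
      linarith
    have hd : 0 < delta2sq h := by
      have h1 : 0 < (deltaj h j₀) ^ 2 := by positivity
      have hs := Finset.single_le_sum (f := fun j => (deltaj h j) ^ 2)
        (fun i _ => sq_nonneg _) (Finset.mem_univ j₀)
      unfold delta2sq
      linarith
    have hφm : AEStronglyMeasurable (fun ω => h (word k ω)) μ :=
      aux_aesm_phi μ hstat C₀ g₀ hg₀ hCb hk0 a₀ h hh01 ht hd
    set m := ∫ ω', h (word k ω') ∂μ with hmdef
    -- integrability and invariance of shifted blocks
    have hint : ∀ j : ℕ, Integrable (fun ω => h (wordAt (j : ℤ) k ω)) μ ∧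
        ∫ ω, h (wordAt (j : ℤ) k ω) ∂μ = m := by
      intro j
      have hcompj : (fun ω : ℤ → A => h (wordAt (j : ℤ) k ω))
          = (fun ω => h (word k ω)) ∘ (Sj (A := A) j) := by
        funext ω
        simp only [Function.comp_apply]
        rw [aux_wordAt_Sj]
      constructor
      · refine ⟨by rw [hcompj]; exact (aux_aesm_comp_Sj_iff μ hstat j _).mpr hφm, ?_⟩
        apply HasFiniteIntegral.of_bounded (C := 1)
        apply ae_of_all
        intro ω
        rw [Real.norm_eq_abs, abs_le]
        exact ⟨by linarith [(hh01 (wordAt (j : ℤ) k ω)).1], (hh01 _).2⟩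
      · rw [hcompj]
        exact aux_integral_comp_Sj μ hstat j (fun ω => h (word k ω))
    set c := g₀ ε (delta1 h) / delta2sq h with hcdef
    have hc : 0 < c := div_pos (hg₀ ε (delta1 h) hε ht) hd
    set N := max (4 * k) (⌈(8 * (k:ℝ) / c) * Real.log ((k:ℝ) * C₁ + 1)⌉₊) with hNdef
    set gv := min (c / (8 * k)) (Real.log (C₁ + Real.exp 1) / ((N:ℝ) + 1)) with hgv
    have hgv0 : 0 < gv := by
      apply lt_min
      · positivity
      · apply div_pos (by linarith) (by positivity)
    refine ⟨gv, hgv0, ?_⟩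
    intro n hn
    have hn1 : 1 ≤ n := le_trans hk hn
    rcases le_or_gt n N with hsmall | hlarge
    · -- small n : use the trivial bound 1
      have hP1 : (μ {ω | ε < |(1 / ((n : ℝ) - k + 1)) *
            ∑ j ∈ Finset.range (n - k + 1), h (wordAt (j : ℤ) k ω) - m|}).toReal ≤ 1 := by
        calc (μ _).toReal ≤ (1 : ℝ≥0∞).toReal := ENNReal.toReal_mono one_ne_top prob_le_one
        _ = 1 := ENNReal.toReal_one
      have hng : (n:ℝ) * gv ≤ Real.log (C₁ + Real.exp 1) := by
        have h1 : gv ≤ Real.log (C₁ + Real.exp 1) / ((N:ℝ) + 1) := min_le_right _ _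
        have h2 : (n:ℝ) ≤ (N:ℝ) := Nat.cast_le.mpr hsmall
        have h3 : (n:ℝ) * gv ≤ ((N:ℝ) + 1) * (Real.log (C₁ + Real.exp 1) / ((N:ℝ) + 1)) := by
          apply mul_le_mul (by linarith) h1 hgv0.le (by positivity)
        rwa [mul_comm ((N:ℝ) + 1), div_mul_cancel₀ _ (by positivity : ((N:ℝ) + 1) ≠ 0)] at h3
      have hexp1 : (1:ℝ) ≤ (C₁ + Real.exp 1) * Real.exp (-(n:ℝ) * gv) := by
        have h3 : Real.exp (-(Real.log (C₁ + Real.exp 1))) ≤ Real.exp (-(n:ℝ) * gv) :=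
          Real.exp_le_exp.mpr (by linarith)
        have h4 : Real.exp (-(Real.log (C₁ + Real.exp 1))) = (C₁ + Real.exp 1)⁻¹ := by
          rw [Real.exp_neg, Real.exp_log hCpos]
        calc (1:ℝ) = (C₁ + Real.exp 1) * (C₁ + Real.exp 1)⁻¹ := (mul_inv_cancel₀ hCpos.ne').symm
        _ ≤ (C₁ + Real.exp 1) * Real.exp (-(n:ℝ) * gv) := by
          apply mul_le_mul_of_nonneg_left _ hCpos.le
          rw [← h4]
          exact h3
      linarith
    · -- large n
      have hN4 : 4 * k ≤ N := le_max_left _ _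
      have h4k : 4 * k ≤ n := by omega
      set M := n - k + 1 with hMdef
      have hMpos : 0 < M := by omega
      set Pm : ℕ → Finset ℕ := fun i => (Finset.range M).filter (fun j => j % k = i) with hPm
      have hPn : ∀ i, ∀ j ∈ Pm i, j + k ≤ n := by
        intro i j hj
        rw [hPm] at hj
        simp only [Finset.mem_filter, Finset.mem_range] at hj
        omega
      have hsep : ∀ i, ∀ j ∈ Pm i, ∀ j' ∈ Pm i, j < j' → j + k ≤ j' := by
        intro i j hj j' hj' hlt
        rw [hPm] at hj hj'
        simp only [Finset.mem_filter, Finset.mem_range] at hj hj'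
        have h1 := Nat.div_add_mod j k
        have h2 := Nat.div_add_mod j' k
        have hdiv : j / k < j' / k := by
          by_contra hcon
          push_neg at hcon
          have := Nat.mul_le_mul_left k hcon
          omega
        have h3 : k * (j / k + 1) ≤ k * (j' / k) := Nat.mul_le_mul_left k hdiv
        have h4 : k * (j / k + 1) = k * (j / k) + k := by ring
        omega
      have hRlb : ∀ i, i < k → n / (2 * k) ≤ (Pm i).card := by
        intro i hik
        have hinj : (Finset.range (n / (2 * k))).card ≤ (Pm i).card := by
          apply Finset.card_le_card_of_injOn (fun r => i + r * k)
          · intro r hr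
            rw [Finset.mem_coe, Finset.mem_range] at hr
            rw [hPm]
            simp only [Finset.mem_coe, Finset.mem_filter, Finset.mem_range]
            constructor
            · have h1 : (r + 1) * k ≤ (n / (2 * k)) * k := Nat.mul_le_mul_right k hr
              have h2 : (n / (2 * k)) * (2 * k) ≤ n := Nat.div_mul_le_self n (2 * k)
              have h3 : (n / (2 * k)) * (2 * k) = (n / (2 * k)) * k + (n / (2 * k)) * k := by
                ring
              have h4 : (r + 1) * k = r * k + k := by ring
              omega
            · rw [Nat.add_mul_mod_self_right]
              exact Nat.mod_eq_of_lt hik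
          · intro r hr r' hr' he
            simp only at he
            have : r * k = r' * k := by omega
            exact Nat.eq_of_mul_eq_mul_right hk0 this
        simpa using hinj
      have hdivpos : 1 ≤ n / (2 * k) := (Nat.one_le_div_iff (by omega)).mpr (by omega)
      have hcardpos : ∀ i, i < k → 0 < (Pm i).card := fun i hik =>
        lt_of_lt_of_le hdivpos (hRlb i hik)
      have hcardne : ∀ i, i < k → ((Pm i).card : ℝ) ≠ 0 := fun i hik =>
        Nat.cast_ne_zero.mpr (hcardpos i hik).ne'
      -- the mean of each spaced average is m
      have hmean : ∀ i, i < k →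
          ∫ ω', spacedF a₀ k n (Pm i) (1 / ((Pm i).card : ℝ)) h (word n ω') ∂μ = m := by
        intro i hik
        have hfe : (fun ω' : ℤ → A =>
              spacedF a₀ k n (Pm i) (1 / ((Pm i).card : ℝ)) h (word n ω'))
            = fun ω' => (1 / ((Pm i).card : ℝ)) * ∑ j ∈ Pm i, h (wordAt (j : ℤ) k ω') :=
          funext fun ω' => aux_spacedF_word a₀ (hPn i) _ h ω'
        rw [hfe, integral_const_mul, integral_finset_sum _ (fun j _ => (hint j).1),
          Finset.sum_congr rfl (fun j _ => (hint j).2), Finset.sum_const, nsmul_eq_mul]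
        rw [one_div, inv_mul_cancel_left₀ (hcardne i hik)]
      -- concentration bound for each spaced average
      have hbound : ∀ i, i < k →
          (μ {ω | ε < |spacedF a₀ k n (Pm i) (1 / ((Pm i).card : ℝ)) h (word n ω) - m|}).toReal
            ≤ C₁ * Real.exp (-(c * ((Pm i).card : ℝ))) := by
        intro i hik
        have hc01 : (0:ℝ) ≤ 1 / ((Pm i).card : ℝ) := by positivity
        have hB := hCb n hn1 (spacedF a₀ k n (Pm i) (1 / ((Pm i).card : ℝ)) h) ε hε
        rw [hmean i hik] at hB
        have hd1 : delta1 (spacedF a₀ k n (Pm i) (1 / ((Pm i).card : ℝ)) h) = delta1 h := by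
          rw [aux_delta1_spacedF a₀ (hsep i) (hPn i) hc01 h, one_div,
            mul_inv_cancel_left₀ (hcardne i hik)]
        have hd2 : delta2sq (spacedF a₀ k n (Pm i) (1 / ((Pm i).card : ℝ)) h)
            = delta2sq h / ((Pm i).card : ℝ) := by
          rw [aux_delta2sq_spacedF a₀ (hsep i) (hPn i) hc01 h]
          exact aux_arith_d2 (hcardne i hik)
        rw [hd1, hd2] at hB
        have hexpeq : -(g₀ ε (delta1 h)) / (delta2sq h / ((Pm i).card : ℝ))
            = -(c * ((Pm i).card : ℝ)) := by
          rw [hcdef]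
          exact aux_arith_exp hd.ne' (hcardne i hik)
        rw [hexpeq] at hB
        exact hB.trans (mul_le_mul_of_nonneg_right hC₀C₁ (Real.exp_nonneg _))
      -- event inclusion
      have hMcast : ((M : ℕ) : ℝ) = (n:ℝ) - k + 1 := by
        rw [hMdef, Nat.cast_add, Nat.cast_sub hn, Nat.cast_one]
      have hMr0 : ((M : ℕ) : ℝ) ≠ 0 := Nat.cast_ne_zero.mpr hMpos.ne'
      have hincl : {ω | ε < |(1 / ((n : ℝ) - k + 1)) *
            ∑ j ∈ Finset.range M, h (wordAt (j : ℤ) k ω) - m|}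
          ⊆ ⋃ i ∈ Finset.range k,
            {ω | ε < |spacedF a₀ k n (Pm i) (1 / ((Pm i).card : ℝ)) h (word n ω) - m|} := by
        intro ω hω
        simp only [Set.mem_setOf_eq] at hω
        by_contra hnotin
        have hni : ∀ i, i < k →
            |spacedF a₀ k n (Pm i) (1 / ((Pm i).card : ℝ)) h (word n ω) - m| ≤ ε := by
          intro i hik
          by_contra hgt
          push_neg at hgt
          exact hnotin (Set.mem_biUnion (Finset.mem_range.mpr hik) hgt)
        have hmaps : ∀ j ∈ Finset.range M, j % k ∈ Finset.range k :=
          fun j _ => Finset.mem_range.mpr (Nat.mod_lt j hk0)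
        have hsplitS : ∑ j ∈ Finset.range M, h (wordAt (j : ℤ) k ω)
            = ∑ i ∈ Finset.range k, ∑ j ∈ Pm i, h (wordAt (j : ℤ) k ω) := by
          simp only [hPm]
          exact (Finset.sum_fiberwise_of_maps_to hmaps _).symm
        have hcardsum : ∑ i ∈ Finset.range k, (Pm i).card = M := by
          simp only [hPm]
          calc ∑ i ∈ Finset.range k,
              ((Finset.range M).filter (fun j => j % k = i)).card
              = (Finset.range M).card := (Finset.card_eq_sum_card_fiberwise hmaps).symm
          _ = M := Finset.card_range M
        have hcastsum : ∑ i ∈ Finset.range k, ((Pm i).card : ℝ) = ((M:ℕ):ℝ) := by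
          rw [← Nat.cast_sum]
          exact_mod_cast congrArg (Nat.cast : ℕ → ℝ) hcardsum
        have hterm : ∀ i ∈ Finset.range k,
            ∑ j ∈ Pm i, h (wordAt (j : ℤ) k ω)
              = ((Pm i).card : ℝ) *
                  spacedF a₀ k n (Pm i) (1 / ((Pm i).card : ℝ)) h (word n ω) := by
          intro i hi
          rw [aux_spacedF_word a₀ (hPn i), one_div, mul_inv_cancel_left₀
            (hcardne i (Finset.mem_range.mp hi))]
        have hrw : (1 / ((n : ℝ) - k + 1)) *
              ∑ j ∈ Finset.range M, h (wordAt (j : ℤ) k ω) - m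
            = ∑ i ∈ Finset.range k, (((Pm i).card : ℝ) / ((M:ℕ):ℝ)) *
                (spacedF a₀ k n (Pm i) (1 / ((Pm i).card : ℝ)) h (word n ω) - m) := by
          rw [← hMcast, hsplitS, Finset.sum_congr rfl hterm]
          rw [Finset.mul_sum]
          have hmrw : ∀ i ∈ Finset.range k,
              (((Pm i).card : ℝ) / ((M:ℕ):ℝ)) *
                (spacedF a₀ k n (Pm i) (1 / ((Pm i).card : ℝ)) h (word n ω) - m)
              = (1 / ((M:ℕ):ℝ)) * (((Pm i).card : ℝ) *
                  spacedF a₀ k n (Pm i) (1 / ((Pm i).card : ℝ)) h (word n ω))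
                - (((Pm i).card : ℝ) / ((M:ℕ):ℝ)) * m := by
            intro i hi
            exact aux_arith_term
          rw [Finset.sum_congr rfl hmrw, Finset.sum_sub_distrib]
          congr 1
          rw [← Finset.sum_mul, ← Finset.sum_div, hcastsum, div_self hMr0, one_mul]
        have habs : |(1 / ((n : ℝ) - k + 1)) *
              ∑ j ∈ Finset.range M, h (wordAt (j : ℤ) k ω) - m| ≤ ε := by
          rw [hrw]
          calc |∑ i ∈ Finset.range k, (((Pm i).card : ℝ) / ((M:ℕ):ℝ)) *
                (spacedF a₀ k n (Pm i) (1 / ((Pm i).card : ℝ)) h (word n ω) - m)|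
              ≤ ∑ i ∈ Finset.range k, |(((Pm i).card : ℝ) / ((M:ℕ):ℝ)) *
                (spacedF a₀ k n (Pm i) (1 / ((Pm i).card : ℝ)) h (word n ω) - m)| :=
            Finset.abs_sum_le_sum_abs _ _
          _ ≤ ∑ i ∈ Finset.range k, (((Pm i).card : ℝ) / ((M:ℕ):ℝ)) * ε := by
            apply Finset.sum_le_sum
            intro i hi
            have hnn : (0:ℝ) ≤ ((Pm i).card : ℝ) / ((M:ℕ):ℝ) :=
              div_nonneg (Nat.cast_nonneg _) (Nat.cast_nonneg _)
            rw [abs_mul, abs_of_nonneg hnn]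
            exact mul_le_mul_of_nonneg_left (hni i (Finset.mem_range.mp hi)) hnn
          _ = ε := by
            rw [← Finset.sum_mul, ← Finset.sum_div, hcastsum, div_self hMr0, one_mul]
        exact absurd hω (not_lt.mpr habs)
      -- assemble the measure bound
      have hfinTop : ∀ i : ℕ,
          μ {ω | ε < |spacedF a₀ k n (Pm i) (1 / ((Pm i).card : ℝ)) h (word n ω) - m|} ≠ ⊤ :=
        fun i => (lt_of_le_of_lt prob_le_one one_lt_top).ne
      have hRi : ∀ i, i < k → (n:ℝ) / (4 * (k:ℝ)) ≤ ((Pm i).card : ℝ) := by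
        intro i hik
        have h1 : ((n / (2 * k) : ℕ) : ℝ) ≤ ((Pm i).card : ℝ) := Nat.cast_le.mpr (hRlb i hik)
        have h2 : (n:ℝ) / (4 * (k:ℝ)) ≤ ((n / (2 * k) : ℕ) : ℝ) := by
          have hq : n < (n / (2 * k)) * (2 * k) + 2 * k := by
            have h1 := Nat.div_add_mod n (2 * k)
            have h2 : n % (2 * k) < 2 * k := Nat.mod_lt n (by omega)
            have h3 : 2 * k * (n / (2 * k)) = (n / (2 * k)) * (2 * k) := Nat.mul_comm _ _
            omega
          have hqr : (n:ℝ) < ((n / (2 * k) : ℕ) : ℝ) * (2 * (k:ℝ)) + 2 * (k:ℝ) := by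
            exact_mod_cast hq
          have h4 : (4:ℝ) * (k:ℝ) ≤ (n:ℝ) := by exact_mod_cast h4k
          rw [div_le_iff₀ (by positivity : (0:ℝ) < 4 * (k:ℝ))]
          nlinarith
        linarith
      have hglek : gv ≤ c / (8 * k) := min_le_left _ _
      have hfac2 : Real.exp (-(c * (n:ℝ) / (8 * k))) ≤ Real.exp (-(n:ℝ) * gv) := by
        apply Real.exp_le_exp.mpr
        have h5 : (n:ℝ) * gv ≤ (n:ℝ) * (c / (8 * k)) :=
          mul_le_mul_of_nonneg_left hglek (by positivity)
        have h6 : (n:ℝ) * (c / (8 * k)) = c * (n:ℝ) / (8 * k) := by ring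
        linarith
      have hfac1 : (k:ℝ) * C₁ * Real.exp (-(c * (n:ℝ) / (8 * k))) ≤ C₁ + Real.exp 1 := by
        have hNceil : ((⌈(8 * (k:ℝ) / c) * Real.log ((k:ℝ) * C₁ + 1)⌉₊ : ℕ) : ℝ) ≤ (N:ℝ) :=
          Nat.cast_le.mpr (le_max_right _ _)
        have hnN : (N:ℝ) ≤ (n:ℝ) := Nat.cast_le.mpr hlarge.le
        have h5 : (8 * (k:ℝ) / c) * Real.log ((k:ℝ) * C₁ + 1) ≤ (n:ℝ) :=
          le_trans (Nat.le_ceil _) (le_trans hNceil hnN)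
        have h6 : c * ((8 * (k:ℝ) / c) * Real.log ((k:ℝ) * C₁ + 1))
            = 8 * (k:ℝ) * Real.log ((k:ℝ) * C₁ + 1) := by
          field_simp
        have h7 := mul_le_mul_of_nonneg_left h5 hc.le
        rw [h6] at h7
        have hn8 : Real.log ((k:ℝ) * C₁ + 1) ≤ c * (n:ℝ) / (8 * k) := by
          rw [le_div_iff₀ (by positivity : (0:ℝ) < 8 * (k:ℝ))]
          linarith
        have hkcpos : (0:ℝ) < (k:ℝ) * C₁ + 1 := by positivity
        have hexple : Real.exp (-(c * (n:ℝ) / (8 * k))) ≤ ((k:ℝ) * C₁ + 1)⁻¹ := by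
          rw [Real.exp_neg]
          apply inv_anti₀ hkcpos
          rw [← Real.exp_log hkcpos]
          exact Real.exp_le_exp.mpr hn8
        calc (k:ℝ) * C₁ * Real.exp (-(c * (n:ℝ) / (8 * k)))
            ≤ (k:ℝ) * C₁ * ((k:ℝ) * C₁ + 1)⁻¹ :=
              mul_le_mul_of_nonneg_left hexple (by positivity)
          _ ≤ 1 := by
              rw [← div_eq_mul_inv]
              apply div_le_one_of_le₀ (by linarith) (by positivity)
          _ ≤ C₁ + Real.exp 1 := by linarith
      have hsplitexp : Real.exp (-(c * ((n:ℝ) / (4 * k))))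
          = Real.exp (-(c * (n:ℝ) / (8 * k))) * Real.exp (-(c * (n:ℝ) / (8 * k))) := by
        rw [← Real.exp_add]
        congr 1
        field_simp
        ring
      calc (μ {ω | ε < |(1 / ((n : ℝ) - k + 1)) *
              ∑ j ∈ Finset.range M, h (wordAt (j : ℤ) k ω) - m|}).toReal
          ≤ (∑ i ∈ Finset.range k,
              μ {ω | ε < |spacedF a₀ k n (Pm i) (1 / ((Pm i).card : ℝ)) h (word n ω) - m|}).toReal := by
            apply ENNReal.toReal_mono
            · exact (ENNReal.sum_lt_top.mpr fun i _ =>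
                (lt_of_le_of_lt prob_le_one one_lt_top)).ne
            · exact le_trans (measure_mono hincl) (measure_biUnion_finset_le _ _)
      _ = ∑ i ∈ Finset.range k,
            (μ {ω | ε < |spacedF a₀ k n (Pm i) (1 / ((Pm i).card : ℝ)) h (word n ω) - m|}).toReal :=
          ENNReal.toReal_sum (fun i _ => hfinTop i)
      _ ≤ ∑ i ∈ Finset.range k, C₁ * Real.exp (-(c * ((Pm i).card : ℝ))) :=
          Finset.sum_le_sum (fun i hi => hbound i (Finset.mem_range.mp hi))
      _ ≤ ∑ i ∈ Finset.range k, C₁ * Real.exp (-(c * ((n:ℝ) / (4 * k)))) := by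
          apply Finset.sum_le_sum
          intro i hi
          apply mul_le_mul_of_nonneg_left _ hC₁0
          apply Real.exp_le_exp.mpr
          have := hRi i (Finset.mem_range.mp hi)
          have h8 : c * ((n:ℝ) / (4 * k)) ≤ c * ((Pm i).card : ℝ) :=
            mul_le_mul_of_nonneg_left this hc.le
          linarith
      _ = (k:ℝ) * (C₁ * Real.exp (-(c * ((n:ℝ) / (4 * k))))) := by
          rw [Finset.sum_const, Finset.card_range, nsmul_eq_mul]
      _ ≤ (C₁ + Real.exp 1) * Real.exp (-(n:ℝ) * gv) := by
          rw [hsplitexp]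
          calc (k:ℝ) * (C₁ * (Real.exp (-(c * (n:ℝ) / (8 * k))) * Real.exp (-(c * (n:ℝ) / (8 * k)))))
              = ((k:ℝ) * C₁ * Real.exp (-(c * (n:ℝ) / (8 * k)))) * Real.exp (-(c * (n:ℝ) / (8 * k))) := by
                ring
          _ ≤ (C₁ + Real.exp 1) * Real.exp (-(n:ℝ) * gv) :=
              mul_le_mul hfac1 hfac2 (Real.exp_nonneg _) hCpos.le

end GT
end

section
/- Let A = {−1,+1}, let ψ : ℝ → (0,1) be continuously differentiable and increasing with ψ(t) + ψ(−t) = 1, let {ξ_n}_{n≥1} be a summable sequence of nonnegative reals and γ ≥ 0, and define the binary auto-regressive kernel P(a|x) := ψ( a Σ_{n≥1} ξ_n x_{−n} + aγ ). Then P is an attractive regular probability kernel; moreover, if ψ is Lipschitz continuous, there exists a constant C > 0 such that var_k ≤ C Σ_{n>k} ξ_n and osc_n ≤ C ξ_n for all k, n ≥ 1. -/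
open MeasureTheory ProbabilityTheory Filter ENNReal

namespace GT

variable {A : Type*} [Fintype A] [MeasurableSpace A]

/-- The oscillation of the kernel at the past coordinate `n` (representing the
paper's `osc_{n+1}`, i.e. the coordinate `x_{-(n+1)}`). -/
noncomputable def oscRate {A : Type*} [Fintype A] (P : A → Past A → ℝ) (n : ℕ) : ℝ :=
  ∑ a : A, sSup {d | ∃ x y : Past A, (∀ i, i ≠ n → x i = y i) ∧ d = |P a x - P a y|}

/-- The alphabet `{-1,+1}` is represented by `Bool`: `true ↦ +1`, `false ↦ -1`
(with the order `false < true` matching `-1 < +1`). -/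
def pmVal (b : Bool) : ℝ := if b then 1 else -1

/-- The binary auto-regressive kernel `P(a|x) = ψ(a ∑_{n≥1} ξ_n x_{-n} + aγ)`
(here `ξ i` represents the paper's `ξ_{i+1}` and `x i` the symbol `x_{-(i+1)}`). -/
noncomputable def arP (ψ : ℝ → ℝ) (ξ : ℕ → ℝ) (γ : ℝ) : Bool → Past Bool → ℝ :=
  fun a x => ψ (pmVal a * (∑' i : ℕ, ξ i * pmVal (x i)) + pmVal a * γ)


lemma abs_pmVal (b : Bool) : |pmVal b| = 1 := by cases b <;> simp [pmVal]

lemma pmVal_mono : Monotone pmVal := by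
  intro a b hab
  cases a <;> cases b
  · exact le_rfl
  · norm_num [pmVal]
  · exact absurd hab (by decide)
  · exact le_rfl

lemma abs_pmVal_sub_le (a b : Bool) : |pmVal a - pmVal b| ≤ 2 := by
  cases a <;> cases b <;> simp [pmVal] <;> norm_num

/-- The summed field `∑ ξ_i x_{-i}` of the auto-regressive kernel. -/
noncomputable def arS (ξ : ℕ → ℝ) (x : Past Bool) : ℝ := ∑' i, ξ i * pmVal (x i)

variable {ξ : ℕ → ℝ}

lemma arS_summable (hξ : Summable ξ) (x : Past Bool) :
    Summable fun i => ξ i * pmVal (x i) := by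
  apply Summable.of_abs
  have h : (fun i => |ξ i * pmVal (x i)|) = fun i => |ξ i| := by
    funext i; rw [abs_mul, abs_pmVal, mul_one]
  rw [h]; exact hξ.abs

lemma arS_measurable (hξ : Summable ξ) : Measurable (arS ξ) := by
  have h1 : ∀ n, Measurable (fun x : Past Bool => ∑ i ∈ Finset.range n, ξ i * pmVal (x i)) := by
    intro n
    refine Finset.measurable_sum _ fun i _ => ?_
    exact ((measurable_of_countable pmVal).comp (measurable_pi_apply i)).const_mul (ξ i)
  exact measurable_of_tendsto_metrizable h1
    (tendsto_pi_nhds.2 fun x => (arS_summable hξ x).hasSum.tendsto_sum_nat)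

lemma abs_arS_le (hξ : Summable ξ) (hξ0 : ∀ i, 0 ≤ ξ i) (x : Past Bool) :
    |arS ξ x| ≤ ∑' i, ξ i := by
  have hs : Summable fun i => ‖ξ i * pmVal (x i)‖ := by
    have h : (fun i => ‖ξ i * pmVal (x i)‖) = fun i => |ξ i| := by
      funext i; rw [Real.norm_eq_abs, abs_mul, abs_pmVal, mul_one]
    rw [h]; exact hξ.abs
  calc |arS ξ x| = ‖∑' i, ξ i * pmVal (x i)‖ := rfl
    _ ≤ ∑' i, ‖ξ i * pmVal (x i)‖ := norm_tsum_le_tsum_norm hs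
    _ = ∑' i, ξ i := by
        refine tsum_congr fun i => ?_
        rw [Real.norm_eq_abs, abs_mul, abs_pmVal, mul_one, abs_of_nonneg (hξ0 i)]

lemma arS_mono (hξ : Summable ξ) (hξ0 : ∀ i, 0 ≤ ξ i) : Monotone (arS ξ) := by
  intro x y hxy
  exact Summable.tsum_le_tsum (fun i => mul_le_mul_of_nonneg_left (pmVal_mono (hxy i)) (hξ0 i))
    (arS_summable hξ x) (arS_summable hξ y)

lemma arS_diff_le (hξ : Summable ξ) (x y : Past Bool) (g : ℕ → ℝ) (hg : Summable g)
    (hb : ∀ i, |ξ i * pmVal (x i) - ξ i * pmVal (y i)| ≤ g i) :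
    |arS ξ x - arS ξ y| ≤ ∑' i, g i := by
  have hsub : arS ξ x - arS ξ y = ∑' i, (ξ i * pmVal (x i) - ξ i * pmVal (y i)) :=
    (Summable.tsum_sub (arS_summable hξ x) (arS_summable hξ y)).symm
  rw [hsub]
  have hsummh : Summable fun i => ‖ξ i * pmVal (x i) - ξ i * pmVal (y i)‖ :=
    hg.of_nonneg_of_le (fun i => norm_nonneg _) (fun i => by simpa using hb i)
  calc |∑' i, (ξ i * pmVal (x i) - ξ i * pmVal (y i))|
      ≤ ∑' i, ‖ξ i * pmVal (x i) - ξ i * pmVal (y i)‖ := norm_tsum_le_tsum_norm hsummh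
    _ ≤ ∑' i, g i := Summable.tsum_le_tsum (fun i => by simpa using hb i) hsummh hg

lemma arS_var (hξ : Summable ξ) (hξ0 : ∀ i, 0 ≤ ξ i) (k : ℕ) (x y : Past Bool)
    (h : ∀ i < k, x i = y i) : |arS ξ x - arS ξ y| ≤ 2 * ∑' i, ξ (k + i) := by
  set g : ℕ → ℝ := fun i => if i < k then 0 else 2 * ξ i with hgdef
  have hgle : ∀ i, g i ≤ 2 * ξ i := by
    intro i; by_cases hi : i < k <;> simp [hgdef, hi] <;> linarith [hξ0 i]
  have hg0 : ∀ i, 0 ≤ g i := by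
    intro i; by_cases hi : i < k <;> simp [hgdef, hi] <;> linarith [hξ0 i]
  have hgsum : Summable g := (hξ.mul_left 2).of_nonneg_of_le hg0 hgle
  have hmain := arS_diff_le hξ x y g hgsum ?_
  · refine hmain.trans ?_
    have hsplit := (Summable.sum_add_tsum_nat_add (f := g) k hgsum).symm
    have hzero : ∑ i ∈ Finset.range k, g i = 0 :=
      Finset.sum_eq_zero fun i hi => by simp [hgdef, Finset.mem_range.mp hi]
    rw [hsplit, hzero, zero_add, ← tsum_mul_left]
    refine le_of_eq (tsum_congr fun i => ?_)
    simp [hgdef, add_comm k i]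
  · intro i
    by_cases hi : i < k
    · simp [hgdef, hi, h i hi]
    · rw [← mul_sub]
      simp only [hgdef, if_neg hi, abs_mul, abs_of_nonneg (hξ0 i), mul_comm]
      exact mul_le_mul_of_nonneg_left (abs_pmVal_sub_le _ _) (hξ0 i)

lemma arS_osc (hξ : Summable ξ) (hξ0 : ∀ i, 0 ≤ ξ i) (n : ℕ) (x y : Past Bool)
    (h : ∀ i, i ≠ n → x i = y i) : |arS ξ x - arS ξ y| ≤ 2 * ξ n := by
  have hsub : arS ξ x - arS ξ y = ∑' i, (ξ i * pmVal (x i) - ξ i * pmVal (y i)) :=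
    (Summable.tsum_sub (arS_summable hξ x) (arS_summable hξ y)).symm
  rw [hsub, tsum_eq_single n (fun i hi => by rw [h i hi, sub_self]), ← mul_sub, abs_mul,
    abs_of_nonneg (hξ0 n), mul_comm 2 (ξ n)]
  exact mul_le_mul_of_nonneg_left (abs_pmVal_sub_le _ _) (hξ0 n)

/-- Binary auto-regressive models are attractive regular probability kernels, and if
`ψ` is Lipschitz then `var_k ≤ C ∑_{n>k} ξ_n` and `osc_n ≤ C ξ_n`. -/
theorem statement17 (ψ : ℝ → ℝ) (ξ : ℕ → ℝ) (γ : ℝ)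
    (hψdiff : ContDiff ℝ 1 ψ) (hψmono : StrictMono ψ)
    (hψrange : ∀ t, ψ t ∈ Set.Ioo (0 : ℝ) 1) (hψsym : ∀ t, ψ t + ψ (-t) = 1)
    (hξsum : Summable ξ) (hξ0 : ∀ i, 0 ≤ ξ i) (hγ : 0 ≤ γ) :
    IsProbKernel (arP ψ ξ γ) ∧ Attractive (arP ψ ξ γ) ∧ RegularKernel (arP ψ ξ γ) ∧
      ((∃ K : NNReal, LipschitzWith K ψ) →
        ∃ C : ℝ, 0 < C ∧
          (∀ k : ℕ, varRate (arP ψ ξ γ) k ≤ C * ∑' i : ℕ, ξ (k + i)) ∧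
          ∀ i : ℕ, oscRate (arP ψ ξ γ) i ≤ C * ξ i) := by
  classical
  set T : ℝ := ∑' i, ξ i with hTdef
  set M : ℝ := T + γ with hMdef
  have hT0 : 0 ≤ T := tsum_nonneg hξ0
  have hM0 : 0 ≤ M := add_nonneg hT0 hγ
  have harP : ∀ (a : Bool) (x : Past Bool),
      arP ψ ξ γ a x = ψ (pmVal a * arS ξ x + pmVal a * γ) := fun a x => rfl
  have hmem : ∀ (a : Bool) (x : Past Bool),
      pmVal a * arS ξ x + pmVal a * γ ∈ Set.Icc (-M) M := by
    intro a x
    rw [← mul_add, Set.mem_Icc, ← abs_le, abs_mul, abs_pmVal, one_mul]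
    calc |arS ξ x + γ| ≤ |arS ξ x| + |γ| := abs_add_le _ _
      _ ≤ T + γ := add_le_add (abs_arS_le hξsum hξ0 x) (le_of_eq (abs_of_nonneg hγ))
  have hPT : ∀ x : Past Bool, arP ψ ξ γ true x = ψ (arS ξ x + γ) := by
    intro x; rw [harP]; norm_num [pmVal]
  have hPF : ∀ x : Past Bool, arP ψ ξ γ false x = ψ (-(arS ξ x + γ)) := by
    intro x; rw [harP]; norm_num [pmVal]; ring_nf
  have hsum1 : ∀ x : Past Bool, ∑ a : Bool, arP ψ ξ γ a x = 1 := by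
    intro x
    rw [Fintype.sum_bool, hPT, hPF]
    exact hψsym _
  have hprob : IsProbKernel (arP ψ ξ γ) := by
    refine ⟨fun a => ?_, fun a x => (hψrange _).1.le, hsum1⟩
    exact hψdiff.continuous.measurable.comp
      (((arS_measurable hξsum).const_mul (pmVal a)).add_const (pmVal a * γ))
  have hattr : Attractive (arP ψ ξ γ) := by
    intro a
    cases a
    · have hfun : (fun x : Past Bool =>
          ∑ b ∈ Finset.univ.filter (fun b => false ≤ b), arP ψ ξ γ b x) = fun _ => 1 := by
        funext x
        rw [Finset.filter_true_of_mem (fun b _ => Bool.false_le b)]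
        exact hsum1 x
      rw [hfun]; exact monotone_const
    · have hfilter : Finset.univ.filter (fun b : Bool => true ≤ b) = {true} := by decide
      have hfun : (fun x : Past Bool =>
          ∑ b ∈ Finset.univ.filter (fun b => true ≤ b), arP ψ ξ γ b x)
            = fun x => arP ψ ξ γ true x := by
        funext x; rw [hfilter, Finset.sum_singleton]
      rw [hfun]
      intro x y hxy
      show arP ψ ξ γ true x ≤ arP ψ ξ γ true y
      rw [hPT, hPT]
      exact hψmono.monotone (add_le_add_left (arS_mono hξsum hξ0 hxy) γ)
  have hnn : StronglyNonNull (arP ψ ξ γ) := by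
    refine ⟨ψ (-M), (hψrange _).1, fun a x => ?_⟩
    rw [harP]
    exact hψmono.monotone (hmem a x).1
  have helem : ∀ K : ℝ,
      (∀ u ∈ Set.Icc (-M) M, ∀ v ∈ Set.Icc (-M) M, |ψ u - ψ v| ≤ K * |u - v|) →
      ∀ (b : Bool) (x y : Past Bool),
        |arP ψ ξ γ b x - arP ψ ξ γ b y| ≤ K * |arS ξ x - arS ξ y| := by
    intro K hK b x y
    rw [harP, harP]
    refine (hK _ (hmem b x) _ (hmem b y)).trans (le_of_eq ?_)
    congr 1
    rw [show pmVal b * arS ξ x + pmVal b * γ - (pmVal b * arS ξ y + pmVal b * γ)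
        = pmVal b * (arS ξ x - arS ξ y) by ring, abs_mul, abs_pmVal, one_mul]
  have hvarle : ∀ K : ℝ, 0 ≤ K →
      (∀ u ∈ Set.Icc (-M) M, ∀ v ∈ Set.Icc (-M) M, |ψ u - ψ v| ≤ K * |u - v|) →
      ∀ k, varRate (arP ψ ξ γ) k ≤ 2 * K * ∑' i, ξ (k + i) := by
    intro K hK0 hK k
    have htail0 : 0 ≤ ∑' i, ξ (k + i) := tsum_nonneg fun i => hξ0 _
    apply Real.sSup_le
    · rintro d ⟨b, x, y, hxy, rfl⟩
      calc |arP ψ ξ γ b x - arP ψ ξ γ b y| ≤ K * |arS ξ x - arS ξ y| := helem K hK b x y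
        _ ≤ K * (2 * ∑' i, ξ (k + i)) :=
            mul_le_mul_of_nonneg_left (arS_var hξsum hξ0 k x y hxy) hK0
        _ = 2 * K * ∑' i, ξ (k + i) := by ring
    · positivity
  have hoscle : ∀ K : ℝ, 0 ≤ K →
      (∀ u ∈ Set.Icc (-M) M, ∀ v ∈ Set.Icc (-M) M, |ψ u - ψ v| ≤ K * |u - v|) →
      ∀ n, oscRate (arP ψ ξ γ) n ≤ 4 * K * ξ n := by
    intro K hK0 hK n
    have hone : ∀ a : Bool,
        sSup {d | ∃ x y : Past Bool, (∀ i, i ≠ n → x i = y i) ∧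
            d = |arP ψ ξ γ a x - arP ψ ξ γ a y|} ≤ 2 * K * ξ n := by
      intro a
      apply Real.sSup_le
      · rintro d ⟨x, y, hxy, rfl⟩
        calc |arP ψ ξ γ a x - arP ψ ξ γ a y| ≤ K * |arS ξ x - arS ξ y| := helem K hK a x y
          _ ≤ K * (2 * ξ n) := mul_le_mul_of_nonneg_left (arS_osc hξsum hξ0 n x y hxy) hK0
          _ = 2 * K * ξ n := by ring
      · exact mul_nonneg (by positivity) (hξ0 n)
    unfold oscRate
    rw [Fintype.sum_bool]
    have h1 := hone true
    have h2 := hone false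
    linarith
  have hcont : ContinuousKernel (arP ψ ξ γ) := by
    obtain ⟨K, hKb⟩ := (isCompact_Icc (a := -M) (b := M)).exists_bound_of_continuousOn
      ((hψdiff.continuous_deriv le_rfl).continuousOn)
    have hK0 : 0 ≤ K := le_trans (norm_nonneg _) (hKb 0 (by constructor <;> linarith))
    have hLip : ∀ u ∈ Set.Icc (-M) M, ∀ v ∈ Set.Icc (-M) M, |ψ u - ψ v| ≤ K * |u - v| := by
      intro u hu v hv
      have := Convex.norm_image_sub_le_of_norm_deriv_le
        (fun t _ => (hψdiff.differentiable one_ne_zero).differentiableAt) hKb (convex_Icc _ _) hv hu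
      simpa [Real.norm_eq_abs] using this
    have h0 : ∀ k, 0 ≤ varRate (arP ψ ξ γ) k := by
      intro k
      have hmemset : (0:ℝ) ∈ {d | ∃ (b : Bool) (x y : Past Bool), (∀ i < k, x i = y i) ∧
          d = |arP ψ ξ γ b x - arP ψ ξ γ b y|} :=
        ⟨true, (fun _ => true), (fun _ => true), fun i _ => rfl, by simp⟩
      refine le_csSup ⟨2 * K * ∑' i, ξ (k + i), ?_⟩ hmemset
      rintro d ⟨b, x, y, hxy, rfl⟩
      calc |arP ψ ξ γ b x - arP ψ ξ γ b y| ≤ K * |arS ξ x - arS ξ y| := helem K hLip b x y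
        _ ≤ K * (2 * ∑' i, ξ (k + i)) :=
            mul_le_mul_of_nonneg_left (arS_var hξsum hξ0 k x y hxy) hK0
        _ = 2 * K * ∑' i, ξ (k + i) := by ring
    have htail : Tendsto (fun k => 2 * K * ∑' i, ξ (k + i)) atTop (nhds 0) := by
      have heq : (fun k => ∑' i, ξ (k + i)) = fun k => ∑' i, ξ (i + k) := by
        funext k; exact tsum_congr fun i => by rw [add_comm]
      have h1 : Tendsto (fun k => ∑' i, ξ (k + i)) atTop (nhds 0) := by
        rw [heq]; exact tendsto_sum_nat_add ξ
      simpa using h1.const_mul (2 * K)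
    exact squeeze_zero h0 (hvarle K hK0 hLip) htail
  refine ⟨hprob, hattr, ⟨hcont, hnn⟩, ?_⟩
  rintro ⟨K, hK⟩
  have hK' : ∀ u ∈ Set.Icc (-M) M, ∀ v ∈ Set.Icc (-M) M, |ψ u - ψ v| ≤ (K:ℝ) * |u - v| := by
    intro u _ v _
    simpa [Real.dist_eq] using hK.dist_le_mul u v
  refine ⟨4 * (K:ℝ) + 1, by positivity, ?_, ?_⟩
  · intro k
    have htail0 : 0 ≤ ∑' i, ξ (k + i) := tsum_nonneg fun i => hξ0 _
    have hv := hvarle (K:ℝ) K.coe_nonneg hK' k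
    nlinarith [mul_nonneg (mul_nonneg (by norm_num : (0:ℝ) ≤ 2) K.coe_nonneg) htail0]
  · intro i
    have ho := hoscle (K:ℝ) K.coe_nonneg hK' i
    linarith [hξ0 i]


end GT
end
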